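/- arXiv:1402.6948 — 4 statements merged into one kernel-verified Lean document; each statement's English description precedes it below -/
import Mathlib

section
/- For all real numbers a, b > 0 and q > 1, one has (a^{q/2} - b^{q/2})^2 ≤ (q^2/(4(q-1))) · (a^{q-1} - b^{q-1}) · (a - b). -/
open MeasureTheory intervalIntegral Set

lemma cs_key (a b q : ℝ) (ha : 0 < a) (hb : 0 < b) (hq : 1 < q) (hba : b ≤ a) :
    (a ^ (q / 2) - b ^ (q / 2)) ^ 2 ≤
      q ^ 2 / (4 * (q - 1)) * ((a ^ (q - 1) - b ^ (q - 1)) * (a - b)) := by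
  set μ := volume.restrict (Set.Ioc b a) with hμ
  haveI : IsFiniteMeasure μ := ⟨by
    rw [hμ, Measure.restrict_apply_univ]; exact measure_Ioc_lt_top⟩
  set r : ℝ := q / 2 - 1 with hr
  set g : ℝ → ℝ := fun t => t ^ r with hg
  have hq1 : (0:ℝ) < q - 1 := by linarith
  have hr1 : (-1:ℝ) < r := by rw [hr]; linarith
  have hmeas : AEStronglyMeasurable g μ := by
    rw [hμ]
    exact ContinuousOn.aestronglyMeasurable (fun t ht =>
      (Real.continuousAt_rpow_const t r
        (Or.inl (ne_of_gt (lt_trans hb ht.1)))).continuousWithinAt) measurableSet_Ioc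
  -- positivity of g on the set
  have hg_nonneg : 0 ≤ᵐ[μ] g := by
    rw [hμ]
    exact (ae_restrict_iff' measurableSet_Ioc).mpr (Filter.Eventually.of_forall
      fun t ht => Real.rpow_nonneg (le_of_lt (lt_trans hb ht.1)) r)
  -- bound for Memℒp
  have hbound : ∀ t ∈ Set.Ioc b a, ‖g t‖ ≤ b ^ r + a ^ r := by
    intro t ht
    have ht0 : 0 < t := lt_trans hb ht.1
    rw [Real.norm_of_nonneg (Real.rpow_nonneg ht0.le r)]
    rcases le_or_gt 0 r with h | h
    · have := Real.rpow_le_rpow ht0.le ht.2 h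
      have hbr : 0 ≤ b ^ r := Real.rpow_nonneg hb.le r
      linarith
    · have := Real.rpow_le_rpow_of_nonpos hb ht.1.le h.le
      have har : 0 ≤ a ^ r := Real.rpow_nonneg ha.le r
      linarith
  have hglp : MemLp g (ENNReal.ofReal 2) μ := by
    refine MemLp.of_bound hmeas (b ^ r + a ^ r) ?_
    rw [hμ, ae_restrict_iff' measurableSet_Ioc]
    filter_upwards with t ht
    exact hbound t ht
  have h1lp : MemLp (fun _ : ℝ => (1:ℝ)) (ENNReal.ofReal 2) μ := memLp_const 1
  have hconj : Real.HolderConjugate 2 2 := Real.holderConjugate_iff.mpr ⟨one_lt_two, by norm_num⟩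
  have hCS := integral_mul_le_Lp_mul_Lq_of_nonneg hconj hg_nonneg
    (Filter.Eventually.of_forall fun _ => zero_le_one) hglp h1lp
  -- compute the integrals
  have hIg : ∫ t, g t ∂μ = (a ^ (q/2) - b ^ (q/2)) / (q/2) := by
    rw [hμ, ← intervalIntegral.integral_of_le hba, integral_rpow (Or.inl hr1)]
    norm_num [hr]
  have hIg2 : ∫ t, g t ^ (2:ℝ) ∂μ = (a ^ (q-1) - b ^ (q-1)) / (q-1) := by
    have : ∀ t ∈ Set.Ioc b a, g t ^ (2:ℝ) = t ^ (2*r) := by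
      intro t ht
      have ht0 : (0:ℝ) ≤ t := (lt_trans hb ht.1).le
      show (t ^ r : ℝ) ^ (2:ℝ) = t ^ (2 * r)
      rw [← Real.rpow_mul ht0]
      ring_nf
    rw [hμ, setIntegral_congr_fun measurableSet_Ioc this,
      ← intervalIntegral.integral_of_le hba, integral_rpow (Or.inl (by rw [hr]; linarith))]
    have : 2 * r + 1 = q - 1 := by rw [hr]; ring
    rw [this]
  have hI1 : ∫ _t, (1:ℝ) ^ (2:ℝ) ∂μ = a - b := by
    simp [hμ, hba, Real.volume_Ioc, ENNReal.toReal_ofReal (by linarith : (0:ℝ) ≤ a - b)]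
  simp only [mul_one] at hCS
  rw [hIg, hIg2, hI1] at hCS
  -- square the inequality
  have hInonneg : 0 ≤ (a ^ (q/2) - b ^ (q/2)) / (q/2) := by
    have h := Real.rpow_le_rpow hb.le hba (by linarith : (0:ℝ) ≤ q/2)
    exact div_nonneg (by linarith) (by linarith)
  have hI2nonneg : 0 ≤ (a ^ (q-1) - b ^ (q-1)) / (q-1) := by
    have h := Real.rpow_le_rpow hb.le hba hq1.le
    exact div_nonneg (by linarith) hq1.le
  have habn : (0:ℝ) ≤ a - b := by linarith
  have hsq : ((a ^ (q/2) - b ^ (q/2)) / (q/2)) ^ 2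
      ≤ (a ^ (q-1) - b ^ (q-1)) / (q-1) * (a - b) := by
    calc ((a ^ (q/2) - b ^ (q/2)) / (q/2)) ^ 2
        ≤ (((a ^ (q-1) - b ^ (q-1)) / (q-1)) ^ (1/2:ℝ) * (a - b) ^ (1/2:ℝ)) ^ 2 := by
          apply pow_le_pow_left₀ hInonneg hCS
      _ = (a ^ (q-1) - b ^ (q-1)) / (q-1) * (a - b) := by
          rw [mul_pow, ← Real.rpow_natCast _ 2, ← Real.rpow_natCast ((a-b) ^ (1/2:ℝ)) 2,
            ← Real.rpow_mul hI2nonneg, ← Real.rpow_mul habn]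
          norm_num
  have hq0 : q / 2 ≠ 0 := by positivity
  rw [div_pow, div_le_iff₀ (by positivity : (0:ℝ) < (q/2)^2)] at hsq
  calc (a ^ (q / 2) - b ^ (q / 2)) ^ 2
      ≤ (a ^ (q-1) - b ^ (q-1)) / (q-1) * (a - b) * (q/2)^2 := hsq
    _ = q ^ 2 / (4 * (q - 1)) * ((a ^ (q - 1) - b ^ (q - 1)) * (a - b)) := by
        field_simp; ring

/-- For all real `a, b > 0` and `q > 1`,
`(a^{q/2} - b^{q/2})² ≤ (q²/(4(q-1))) · (a^{q-1} - b^{q-1}) · (a - b)`. -/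
theorem power_mean_inequality (a b q : ℝ) (ha : 0 < a) (hb : 0 < b) (hq : 1 < q) :
    (a ^ (q / 2) - b ^ (q / 2)) ^ 2 ≤
      q ^ 2 / (4 * (q - 1)) * ((a ^ (q - 1) - b ^ (q - 1)) * (a - b)) := by
  rcases le_total b a with h | h
  · exact cs_key a b q ha hb hq h
  · have := cs_key b a q hb ha hq h
    calc (a ^ (q / 2) - b ^ (q / 2)) ^ 2 = (b ^ (q / 2) - a ^ (q / 2)) ^ 2 := by ring
      _ ≤ q ^ 2 / (4 * (q - 1)) * ((b ^ (q - 1) - a ^ (q - 1)) * (b - a)) := this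
      _ = q ^ 2 / (4 * (q - 1)) * ((a ^ (q - 1) - b ^ (q - 1)) * (a - b)) := by ring
end

section
/- Let t ↦ g(t) be a continuously differentiable family of strictly positive self-adjoint operators on a finite-dimensional Hilbert space. Then d/dt log g(t) = ∫₀^∞ (s + g(t))⁻¹ · g'(t) · (s + g(t))⁻¹ ds. -/
open MeasureTheory
open scoped ComplexOrder

namespace DerivOpLogAux

open Matrix Set Filter Complex

variable {n : ℕ}

/-- integrability of `(s+c)⁻²` on `(0,∞)`. -/
lemma integrableOn_inv_sq {c : ℝ} (hc : 0 < c) :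
    IntegrableOn (fun s : ℝ => ((s + c)⁻¹) ^ 2) (Set.Ioi 0) := by
  have hderiv : ∀ x ∈ Set.Ici (0:ℝ), HasDerivAt (fun s : ℝ => -(s + c)⁻¹) (((x + c)⁻¹) ^ 2) x := by
    intro x hx
    have hx' : (0:ℝ) ≤ x := hx
    have hxc : x + c ≠ 0 := by positivity
    have h1 : HasDerivAt (fun s : ℝ => s + c) 1 x := (hasDerivAt_id x).add_const c
    have h2 := (h1.inv hxc).neg
    have h3 : -(-1 / (x + c) ^ 2) = ((x + c)⁻¹) ^ 2 := by rw [neg_div, neg_neg, one_div, inv_pow]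
    rw [h3] at h2
    exact h2
  have htend : Tendsto (fun s : ℝ => -(s + c)⁻¹) atTop (nhds 0) := by
    rw [show (0:ℝ) = -0 by ring]
    exact (tendsto_inv_atTop_zero.comp (tendsto_atTop_add_const_right _ c tendsto_id)).neg
  exact integrableOn_Ioi_deriv_of_nonneg' hderiv (fun x _ => by positivity) htend

lemma resolvent_diff_eq {x : ℝ} (hx : 0 < x) {s : ℝ} (hs : 0 < s) :
    (s + 1)⁻¹ - (s + x)⁻¹ = (x - 1) * ((s + 1)⁻¹ * (s + x)⁻¹) := by
  have h1 : s + 1 ≠ 0 := by positivity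
  have h2 : s + x ≠ 0 := by positivity
  field_simp
  ring

/-- integrability of `(s+1)⁻¹ - (s+x)⁻¹` on `(0,∞)`. -/
lemma integrableOn_resolvent_diff {x : ℝ} (hx : 0 < x) :
    IntegrableOn (fun s : ℝ => (s + 1)⁻¹ - (s + x)⁻¹) (Set.Ioi 0) := by
  have hc : 0 < min 1 x := lt_min one_pos hx
  have hmeas : AEStronglyMeasurable (fun s : ℝ => (s + 1)⁻¹ - (s + x)⁻¹)
      (volume.restrict (Set.Ioi 0)) := by
    apply ContinuousOn.aestronglyMeasurable _ measurableSet_Ioi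
    intro s hs
    have h1 : s + 1 ≠ 0 := by have := hs.out; positivity
    have h2 : s + x ≠ 0 := by have := hs.out; positivity
    exact (((continuousAt_id.add continuousAt_const).inv₀ h1).sub
      ((continuousAt_id.add continuousAt_const).inv₀ h2)).continuousWithinAt
  refine ((integrableOn_inv_sq hc).const_mul |x - 1|).mono' hmeas ?_
  filter_upwards [ae_restrict_mem measurableSet_Ioi] with s hs
  have hs' : (0:ℝ) < s := hs
  rw [resolvent_diff_eq hx hs']
  rw [norm_mul, Real.norm_eq_abs, Real.norm_eq_abs]
  have h1 : |(s + 1)⁻¹ * (s + x)⁻¹| ≤ ((s + min 1 x)⁻¹) ^ 2 := by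
    rw [abs_mul, abs_inv, abs_inv, sq]
    have hsc : 0 < s + min 1 x := by positivity
    gcongr
    · rw [abs_of_pos (by positivity : (0:ℝ) < s + 1)]
      exact add_le_add_right (min_le_left 1 x) s
    · rw [abs_of_pos (by positivity : (0:ℝ) < s + x)]
      exact add_le_add_right (min_le_right 1 x) s
  calc |x - 1| * |(s + 1)⁻¹ * (s + x)⁻¹| ≤ |x - 1| * ((s + min 1 x)⁻¹) ^ 2 := by
        exact mul_le_mul_of_nonneg_left h1 (abs_nonneg _)
    _ = |x - 1| * ((s + min 1 x)⁻¹) ^ 2 := rfl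

/-- the scalar integral representation of the logarithm. -/
lemma integral_resolvent_diff {x : ℝ} (hx : 0 < x) :
    ∫ s in Set.Ioi (0:ℝ), ((s + 1)⁻¹ - (s + x)⁻¹) = Real.log x := by
  have hderiv : ∀ s ∈ Set.Ici (0:ℝ),
      HasDerivAt (fun s : ℝ => Real.log (s + 1) - Real.log (s + x))
        ((s + 1)⁻¹ - (s + x)⁻¹) s := by
    intro s hs
    have hs' : (0:ℝ) ≤ s := hs
    have h1 : s + 1 ≠ 0 := by positivity
    have h2 : s + x ≠ 0 := by positivity
    have d1 : HasDerivAt (fun s : ℝ => Real.log (s + 1)) ((s+1)⁻¹) s := by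
      simpa [one_div] using (((hasDerivAt_id s).add_const (1:ℝ)).log h1)
    have d2 : HasDerivAt (fun s : ℝ => Real.log (s + x)) ((s+x)⁻¹) s := by
      simpa [one_div] using (((hasDerivAt_id s).add_const x).log h2)
    exact d1.sub d2
  have htend : Tendsto (fun s : ℝ => Real.log (s + 1) - Real.log (s + x)) atTop (nhds 0) := by
    have h1 : Tendsto (fun s : ℝ => (s + 1) / (s + x)) atTop (nhds 1) := by
      have : (fun s : ℝ => (s + 1) / (s + x)) =ᶠ[atTop] fun s => (1 + 1/s) / (1 + x/s) := by
        filter_upwards [eventually_gt_atTop 0] with s hs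
        have h2 : s + x ≠ 0 := by positivity
        field_simp
      rw [tendsto_congr' this]
      have hinv : Tendsto (fun s : ℝ => s⁻¹) atTop (nhds 0) := tendsto_inv_atTop_zero
      have hnum : Tendsto (fun s : ℝ => 1 + 1/s) atTop (nhds 1) := by
        simpa [one_div] using tendsto_const_nhds.add hinv
      have hden : Tendsto (fun s : ℝ => 1 + x/s) atTop (nhds 1) := by
        have : Tendsto (fun s : ℝ => x * s⁻¹) atTop (nhds 0) := by
          simpa using hinv.const_mul x
        simpa [div_eq_mul_inv] using tendsto_const_nhds.add this
      simpa [Pi.div_def] using hnum.div hden one_ne_zero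
    have h2 : (fun s : ℝ => Real.log (s + 1) - Real.log (s + x)) =ᶠ[atTop]
        fun s => Real.log ((s + 1) / (s + x)) := by
      filter_upwards [eventually_gt_atTop 0] with s hs
      rw [Real.log_div (by positivity) (by positivity)]
    rw [tendsto_congr' h2, show (0:ℝ) = Real.log 1 by simp]
    exact (Real.continuousAt_log one_ne_zero).tendsto.comp h1
  have := integral_Ioi_of_hasDerivAt_of_tendsto' hderiv (integrableOn_resolvent_diff hx) htend
  simpa [Real.log_one] using this

section Matrices

variable {A : Matrix (Fin n) (Fin n) ℂ} (hA : A.IsHermitian)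

local notation "U" => (Matrix.IsHermitian.eigenvectorUnitary hA : Matrix (Fin n) (Fin n) ℂ)

lemma shift_eq :
    ∀ s : ℝ, (s:ℂ) • 1 + A =
      U * Matrix.diagonal (fun k => ((s + hA.eigenvalues k : ℝ) : ℂ)) * star U := by
  intro s
  conv_lhs => rw [hA.spectral_theorem, Unitary.conjStarAlgAut_apply]
  have hUU : U * star U = 1 := Unitary.coe_mul_star_self _
  have h1 : (s:ℂ) • (1 : Matrix (Fin n) (Fin n) ℂ)
      = U * Matrix.diagonal (fun _ => (s:ℂ)) * star U := by
    rw [← Matrix.smul_one_eq_diagonal]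
    rw [Matrix.mul_smul, Matrix.smul_mul, mul_one, hUU]
  rw [h1]
  rw [← Matrix.add_mul, ← Matrix.mul_add, Matrix.diagonal_add]
  congr 2
  ext k
  simp [Complex.ofReal_add]

lemma shift_inv (s : ℝ) (hs : ∀ k, s + hA.eigenvalues k ≠ 0) :
    ((s:ℂ) • 1 + A)⁻¹ =
      U * Matrix.diagonal (fun k => ((s + hA.eigenvalues k : ℝ) : ℂ)⁻¹) * star U := by
  rw [shift_eq hA s]
  apply Matrix.inv_eq_right_inv
  have hUU : U * star U = 1 := Unitary.coe_mul_star_self _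
  have hsU : star U * U = 1 := Unitary.coe_star_mul_self _
  calc U * Matrix.diagonal (fun k => ((s + hA.eigenvalues k : ℝ) : ℂ)) * star U *
        (U * Matrix.diagonal (fun k => ((s + hA.eigenvalues k : ℝ) : ℂ)⁻¹) * star U)
      = U * Matrix.diagonal (fun k => ((s + hA.eigenvalues k : ℝ) : ℂ)) *
          (star U * U) * Matrix.diagonal (fun k => ((s + hA.eigenvalues k : ℝ) : ℂ)⁻¹) * star U := by
        noncomm_ring
    _ = U * (Matrix.diagonal (fun k => ((s + hA.eigenvalues k : ℝ) : ℂ)) *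
          Matrix.diagonal (fun k => ((s + hA.eigenvalues k : ℝ) : ℂ)⁻¹)) * star U := by
        rw [hsU, mul_one]; noncomm_ring
    _ = 1 := by
        rw [Matrix.diagonal_mul_diagonal]
        have : (fun k => ((s + hA.eigenvalues k : ℝ) : ℂ) * ((s + hA.eigenvalues k : ℝ) : ℂ)⁻¹)
            = fun _ => 1 := by
          ext k
          exact mul_inv_cancel₀ (by exact_mod_cast hs k)
        rw [this, Matrix.diagonal_one, mul_one, hUU]

/-- entries of a conjugated diagonal matrix. -/
lemma conj_diag_apply (d : Fin n → ℂ) (i j : Fin n) :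
    (U * Matrix.diagonal d * star U) i j
      = ∑ k, (U) i k * d k * (starRingEnd ℂ) ((U) j k) := by
  rw [Matrix.mul_apply]
  congr 1
  ext k
  rw [Matrix.mul_apply]
  rw [Finset.sum_mul]
  rw [Finset.sum_eq_single k]
  · simp [Matrix.diagonal_apply_eq, Matrix.star_apply]
  · intro l _ hl
    simp [Matrix.diagonal_apply_ne _ hl]
  · simp

lemma unitary_entry_norm_le (i k : Fin n) : ‖(U) i k‖ ≤ 1 := by
  have hUU : U * star U = 1 := Unitary.coe_mul_star_self _
  have h := congrArg (fun M => (M i i).re) hUU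
  simp only [Matrix.mul_apply, Matrix.one_apply_eq, Matrix.star_apply, Complex.one_re] at h
  rw [Complex.re_sum] at h
  have hterm : ∀ l, ((U) i l * star ((U) i l)).re = ‖(U) i l‖ ^ 2 := by
    intro l
    rw [Complex.star_def, Complex.mul_conj]
    rw [Complex.ofReal_re, ← Complex.sq_norm]
  rw [Finset.sum_congr rfl (fun l _ => hterm l)] at h
  have hk : ‖(U) i k‖ ^ 2 ≤ 1 := by
    rw [← h]
    exact Finset.single_le_sum (f := fun l => ‖(U) i l‖ ^ 2) (fun l _ => sq_nonneg _)
      (Finset.mem_univ k)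
  nlinarith [norm_nonneg ((U) i k)]

lemma shift_inv_entry_bound {c s : ℝ} (hc : 0 < c) (hs : 0 ≤ s)
    (hev : ∀ k, c ≤ hA.eigenvalues k) (i j : Fin n) :
    ‖(((s:ℂ) • 1 + A)⁻¹) i j‖ ≤ n * (s + c)⁻¹ := by
  have hnz : ∀ k, s + hA.eigenvalues k ≠ 0 := fun k =>
    ne_of_gt (by have := hev k; linarith)
  rw [shift_inv hA s hnz, conj_diag_apply]
  calc ‖∑ k, (U) i k * ((s + hA.eigenvalues k : ℝ) : ℂ)⁻¹ * (starRingEnd ℂ) ((U) j k)‖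
      ≤ ∑ k, ‖(U) i k * ((s + hA.eigenvalues k : ℝ) : ℂ)⁻¹ * (starRingEnd ℂ) ((U) j k)‖ :=
        norm_sum_le _ _
    _ ≤ ∑ _k : Fin n, (s + c)⁻¹ := by
        apply Finset.sum_le_sum
        intro k _
        rw [norm_mul, norm_mul, norm_inv]
        have h1 : ‖((s + hA.eigenvalues k : ℝ) : ℂ)‖ = s + hA.eigenvalues k := by
          rw [Complex.norm_real, Real.norm_eq_abs,
            abs_of_pos (show (0:ℝ) < s + hA.eigenvalues k by have := hev k; linarith)]
        have h3 : ‖(starRingEnd ℂ) ((U) j k)‖ = ‖(U) j k‖ := norm_star _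
        rw [h1, h3]
        have h2 : (s + hA.eigenvalues k)⁻¹ ≤ (s + c)⁻¹ := by
          apply inv_anti₀ (by positivity)
          exact add_le_add_right (hev k) s
        calc ‖(U) i k‖ * (s + hA.eigenvalues k)⁻¹ * ‖(U) j k‖
            ≤ 1 * (s + c)⁻¹ * 1 := by
              apply mul_le_mul (mul_le_mul (unitary_entry_norm_le hA i k) h2
                (inv_nonneg.mpr (by have := hev k; linarith)) zero_le_one)
                (unitary_entry_norm_le hA j k) (norm_nonneg _) (by positivity)
          _ = (s + c)⁻¹ := by ring
    _ = n * (s + c)⁻¹ := by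
        rw [Finset.sum_const, Finset.card_univ, Fintype.card_fin, nsmul_eq_mul]

lemma star_dot_self (x : Fin n → ℂ) :
    dotProduct (star x) x = ((∑ i, ‖x i‖^2 : ℝ) : ℂ) := by
  simp only [dotProduct, Pi.star_apply, Complex.star_def]
  push_cast
  congr 1
  ext i
  rw [mul_comm, Complex.mul_conj]
  norm_cast
  rw [Complex.normSq_eq_norm_sq]

lemma quad_form_lower {c : ℝ} (hc : 0 ≤ c) (hev : ∀ k, c ≤ hA.eigenvalues k)
    (x : Fin n → ℂ) :
    c * ∑ i, ‖x i‖^2 ≤ (dotProduct (star x) (A *ᵥ x)).re := by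
  classical
  set y : Fin n → ℂ := star U *ᵥ x with hy
  have hUU : U * star U = 1 := Unitary.coe_mul_star_self _
  have hstar_y : star y = star x ᵥ* U := by
    rw [hy]
    have : star U = (U)ᴴ := rfl
    rw [this, Matrix.star_mulVec, Matrix.conjTranspose_conjTranspose]
  have step1 : dotProduct (star x) (A *ᵥ x)
      = dotProduct (star y) (Matrix.diagonal (RCLike.ofReal ∘ hA.eigenvalues) *ᵥ y) := by
    conv_lhs => rw [hA.spectral_theorem, Unitary.conjStarAlgAut_apply]
    rw [← Matrix.mulVec_mulVec, ← Matrix.mulVec_mulVec, Matrix.dotProduct_mulVec (star x),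
      ← hstar_y]
  have step3 : dotProduct (star y) y = dotProduct (star x) x := by
    rw [hstar_y, hy, ← Matrix.dotProduct_mulVec, Matrix.mulVec_mulVec, hUU, Matrix.one_mulVec]
  have hterm : ∀ k, (Matrix.diagonal (RCLike.ofReal ∘ hA.eigenvalues) *ᵥ y) k
      = (hA.eigenvalues k : ℂ) * y k := by
    intro k
    rw [Matrix.mulVec_diagonal]
    rfl
  have step2 : (dotProduct (star y) (Matrix.diagonal (RCLike.ofReal ∘ hA.eigenvalues) *ᵥ y)).re
      = ∑ k, hA.eigenvalues k * ‖y k‖^2 := by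
    rw [dotProduct]
    rw [Complex.re_sum]
    congr 1
    ext k
    rw [hterm k, Pi.star_apply, Complex.star_def]
    have : (starRingEnd ℂ) (y k) * ((hA.eigenvalues k : ℂ) * y k)
        = (hA.eigenvalues k : ℂ) * ((y k) * (starRingEnd ℂ) (y k)) := by ring
    rw [this, Complex.mul_conj]
    norm_cast
    rw [Complex.normSq_eq_norm_sq]
  have hxy : ∑ k, ‖y k‖^2 = ∑ i, ‖x i‖^2 := by
    have := congrArg Complex.re (step3.trans (star_dot_self x))
    rw [star_dot_self y] at this
    exact_mod_cast this
  rw [step1, step2, ← hxy]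
  calc c * ∑ k, ‖y k‖^2 = ∑ k, c * ‖y k‖^2 := by rw [Finset.mul_sum]
    _ ≤ ∑ k, hA.eigenvalues k * ‖y k‖^2 := by
        apply Finset.sum_le_sum
        intro k _
        exact mul_le_mul_of_nonneg_right (hev k) (sq_nonneg _)

lemma eigenvalue_lower {c : ℝ}
    (h : ∀ x : Fin n → ℂ, c * ∑ i, ‖x i‖^2 ≤ (dotProduct (star x) (A *ᵥ x)).re)
    (k : Fin n) : c ≤ hA.eigenvalues k := by
  set v : Fin n → ℂ := ⇑(hA.eigenvectorBasis k) with hv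
  have hnorm : ∑ i, ‖v i‖^2 = 1 := by
    have h1 : ‖hA.eigenvectorBasis k‖ = 1 := hA.eigenvectorBasis.orthonormal.1 k
    have h2 : ‖hA.eigenvectorBasis k‖^2 = ∑ i, ‖v i‖^2 := by
      rw [EuclideanSpace.norm_eq]
      rw [Real.sq_sqrt (Finset.sum_nonneg fun i _ => sq_nonneg _)]
    rw [← h2, h1, one_pow]
  have heig : A *ᵥ v = (hA.eigenvalues k : ℂ) • v := by
    ext i
    have h0 := congrFun (hA.mulVec_eigenvectorBasis k) i
    simp only [Pi.smul_apply, Complex.real_smul] at h0 ⊢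
    exact h0
  have : dotProduct (star v) (A *ᵥ v) = (hA.eigenvalues k : ℂ) := by
    rw [heig, dotProduct_smul, star_dot_self, hnorm]
    simp
  have h3 := h v
  rw [this] at h3
  rw [hnorm, mul_one] at h3
  exact_mod_cast h3

lemma integral_ofReal' {f : ℝ → ℝ} {μ : Measure ℝ} :
    ∫ x, ((f x : ℝ) : ℂ) ∂μ = ((∫ x, f x ∂μ : ℝ) : ℂ) :=
  integral_ofReal

lemma integrand_rep (hApos : A.PosDef) (i j : Fin n) {s : ℝ} (hs : 0 < s) :
    ((((s+1)⁻¹ : ℝ) : ℂ) • (1 : Matrix (Fin n) (Fin n) ℂ) - ((s:ℂ) • 1 + A)⁻¹) i j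
      = ∑ k, (Matrix.IsHermitian.eigenvectorUnitary hApos.isHermitian :
            Matrix (Fin n) (Fin n) ℂ) i k *
          ((((s+1)⁻¹ - (s + hApos.isHermitian.eigenvalues k)⁻¹ : ℝ)) : ℂ) *
          (starRingEnd ℂ) ((Matrix.IsHermitian.eigenvectorUnitary hApos.isHermitian :
            Matrix (Fin n) (Fin n) ℂ) j k) := by
  have hUU : (Matrix.IsHermitian.eigenvectorUnitary hApos.isHermitian :
      Matrix (Fin n) (Fin n) ℂ) * star (Matrix.IsHermitian.eigenvectorUnitary hApos.isHermitian :
      Matrix (Fin n) (Fin n) ℂ) = 1 := Unitary.coe_mul_star_self _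
  have hone : (((s+1)⁻¹ : ℝ) : ℂ) • (1 : Matrix (Fin n) (Fin n) ℂ)
      = (Matrix.IsHermitian.eigenvectorUnitary hApos.isHermitian : Matrix (Fin n) (Fin n) ℂ) *
        Matrix.diagonal (fun _ => (((s+1)⁻¹ : ℝ) : ℂ)) *
        star (Matrix.IsHermitian.eigenvectorUnitary hApos.isHermitian :
          Matrix (Fin n) (Fin n) ℂ) := by
    rw [← Matrix.smul_one_eq_diagonal]
    rw [Matrix.mul_smul, Matrix.smul_mul, mul_one, hUU]
  have hinv := shift_inv (hA := hApos.isHermitian) s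
    (fun k => ne_of_gt (by have := hApos.eigenvalues_pos k; linarith))
  rw [Matrix.sub_apply, hone, hinv, conj_diag_apply, conj_diag_apply, ← Finset.sum_sub_distrib]
  apply Finset.sum_congr rfl
  intro k _
  push_cast
  ring

lemma integrableOn_entry (hApos : A.PosDef) (i j : Fin n) :
    IntegrableOn (fun s : ℝ =>
        ((((s+1)⁻¹ : ℝ) : ℂ) • (1 : Matrix (Fin n) (Fin n) ℂ) - ((s:ℂ) • 1 + A)⁻¹) i j)
      (Set.Ioi 0) := by
  have hsum : IntegrableOn (fun s : ℝ =>
      ∑ k, (Matrix.IsHermitian.eigenvectorUnitary hApos.isHermitian :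
            Matrix (Fin n) (Fin n) ℂ) i k *
          ((((s+1)⁻¹ - (s + hApos.isHermitian.eigenvalues k)⁻¹ : ℝ)) : ℂ) *
          (starRingEnd ℂ) ((Matrix.IsHermitian.eigenvectorUnitary hApos.isHermitian :
            Matrix (Fin n) (Fin n) ℂ) j k)) (Set.Ioi 0) := by
    apply integrable_finset_sum
    intro k _
    have h := (integrableOn_resolvent_diff (hApos.eigenvalues_pos k)).ofReal (𝕜 := ℂ)
    exact (h.const_mul _).mul_const _
  apply hsum.congr
  filter_upwards [ae_restrict_mem measurableSet_Ioi] with s hs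
  exact (integrand_rep hApos i j hs).symm

lemma log_entry_rep (hApos : A.PosDef) (i j : Fin n) :
    cfc Real.log A i j = ∫ s in Set.Ioi (0:ℝ),
      ((((s+1)⁻¹ : ℝ) : ℂ) • (1 : Matrix (Fin n) (Fin n) ℂ) - ((s:ℂ) • 1 + A)⁻¹) i j := by
  have hrep : ∫ s in Set.Ioi (0:ℝ),
      ((((s+1)⁻¹ : ℝ) : ℂ) • (1 : Matrix (Fin n) (Fin n) ℂ) - ((s:ℂ) • 1 + A)⁻¹) i j
      = ∫ s in Set.Ioi (0:ℝ), ∑ k,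
          (Matrix.IsHermitian.eigenvectorUnitary hApos.isHermitian :
            Matrix (Fin n) (Fin n) ℂ) i k *
          ((((s+1)⁻¹ - (s + hApos.isHermitian.eigenvalues k)⁻¹ : ℝ)) : ℂ) *
          (starRingEnd ℂ) ((Matrix.IsHermitian.eigenvectorUnitary hApos.isHermitian :
            Matrix (Fin n) (Fin n) ℂ) j k) := by
    apply integral_congr_ae
    filter_upwards [ae_restrict_mem measurableSet_Ioi] with s hs
    exact integrand_rep hApos i j hs
  rw [hrep, MeasureTheory.integral_finset_sum]
  swap
  · intro k _
    have h := (integrableOn_resolvent_diff (hApos.eigenvalues_pos k)).ofReal (𝕜 := ℂ)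
    exact (h.const_mul _).mul_const _
  rw [hApos.isHermitian.cfc_eq, Matrix.IsHermitian.cfc, Unitary.conjStarAlgAut_apply, conj_diag_apply]
  apply Finset.sum_congr rfl
  intro k _
  rw [MeasureTheory.integral_mul_const, MeasureTheory.integral_const_mul,
    integral_ofReal', integral_resolvent_diff (hApos.eigenvalues_pos k)]
  rfl

end Matrices

section InvDeriv

lemma continuousAt_matrix_inv' {B : ℝ → Matrix (Fin n) (Fin n) ℂ} {x : ℝ}
    (hB : ∀ i j, ContinuousAt (fun u => B u i j) x) (h : IsUnit (B x)) :
    ContinuousAt (fun u => (B u)⁻¹) x := by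
  have hBc : ContinuousAt B x := by
    apply continuousAt_pi.2
    intro i
    rw [continuousAt_pi]
    intro j
    exact hB i j
  have hdet : (B x).det ≠ 0 :=
    isUnit_iff_ne_zero.1 ((Matrix.isUnit_iff_isUnit_det _).1 h)
  have hinv : ContinuousAt Inv.inv (B x) := by
    apply continuousAt_matrix_inv
    have : (Ring.inverse : ℂ → ℂ) = Inv.inv := by
      ext z; exact Ring.inverse_eq_inv z
    rw [this]
    exact continuousAt_inv₀ hdet
  exact hinv.comp hBc

lemma continuousAt_inv_entry {B : ℝ → Matrix (Fin n) (Fin n) ℂ} {x : ℝ}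
    (hB : ∀ i j, ContinuousAt (fun u => B u i j) x) (h : IsUnit (B x)) (i j : Fin n) :
    ContinuousAt (fun u => (B u)⁻¹ i j) x := by
  have h1 : ContinuousAt (fun M : Matrix (Fin n) (Fin n) ℂ => M i j) ((B x)⁻¹) :=
    ((continuous_apply j).comp (continuous_apply i)).continuousAt
  exact ContinuousAt.comp (g := fun M : Matrix (Fin n) (Fin n) ℂ => M i j)
    (f := fun u => (B u)⁻¹) h1 (continuousAt_matrix_inv' hB h)

lemma hasDerivAt_inv_entry {B : ℝ → Matrix (Fin n) (Fin n) ℂ}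
    {B' : Matrix (Fin n) (Fin n) ℂ} {t : ℝ} (hu : ∀ u, IsUnit (B u))
    (hd : ∀ i j, HasDerivAt (fun u => B u i j) (B' i j) t) (i j : Fin n) :
    HasDerivAt (fun u => (B u)⁻¹ i j) ((-((B t)⁻¹ * B' * (B t)⁻¹)) i j) t := by
  rw [hasDerivAt_iff_tendsto_slope]
  have hdiff : ∀ u, (B u)⁻¹ - (B t)⁻¹ = (B u)⁻¹ * (B t - B u) * (B t)⁻¹ := by
    intro u
    rw [Matrix.mul_sub, Matrix.sub_mul, Matrix.mul_assoc,
      Matrix.mul_nonsing_inv _ ((Matrix.isUnit_iff_isUnit_det _).1 (hu t)),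
      Matrix.nonsing_inv_mul _ ((Matrix.isUnit_iff_isUnit_det _).1 (hu u))]
    rw [Matrix.one_mul, Matrix.mul_one]
  have key : ∀ u : ℝ, slope (fun u => (B u)⁻¹ i j) t u
      = ∑ l, (∑ k, (B u)⁻¹ i k * (-(slope (fun v => B v k l) t u))) * (B t)⁻¹ l j := by
    intro u
    rw [slope_def_module]
    have h1 : (B u)⁻¹ i j - (B t)⁻¹ i j = ((B u)⁻¹ * (B t - B u) * (B t)⁻¹) i j := by
      rw [← Matrix.sub_apply, hdiff u]
    rw [h1, Matrix.mul_apply, Finset.smul_sum]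
    apply Finset.sum_congr rfl
    intro l _
    rw [← smul_mul_assoc, Matrix.mul_apply, Finset.smul_sum]
    congr 1
    apply Finset.sum_congr rfl
    intro k _
    rw [← mul_smul_comm]
    congr 1
    rw [slope_def_module, Matrix.sub_apply, ← neg_sub (B u k l) (B t k l), smul_neg]
  have target_eq : (-((B t)⁻¹ * B' * (B t)⁻¹)) i j
      = ∑ l, (∑ k, (B t)⁻¹ i k * (-(B' k l))) * (B t)⁻¹ l j := by
    simp only [Matrix.neg_apply, Matrix.mul_apply, mul_neg, Finset.sum_neg_distrib,
      neg_mul, Finset.sum_mul]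
  rw [funext key, target_eq]
  apply tendsto_finset_sum
  intro l _
  apply Tendsto.mul _ tendsto_const_nhds
  apply tendsto_finset_sum
  intro k _
  apply Tendsto.mul
  · have hc : ContinuousAt (fun u => (B u)⁻¹ i k) t :=
      continuousAt_inv_entry (fun i j => (hd i j).continuousAt) (hu t) i k
    exact hc.tendsto.mono_left nhdsWithin_le_nhds
  · exact (hasDerivAt_iff_tendsto_slope.1 (hd k l)).neg

lemma quad_abs_le (M : Matrix (Fin n) (Fin n) ℂ) {δ : ℝ} (hδ : 0 ≤ δ)
    (h : ∀ k l, ‖M k l‖ ≤ δ) (x : Fin n → ℂ) :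
    ‖dotProduct (star x) (M *ᵥ x)‖ ≤ δ * ((n : ℝ) * ∑ i, ‖x i‖^2) := by
  have step1 : ‖dotProduct (star x) (M *ᵥ x)‖ ≤ δ * (∑ i, ‖x i‖)^2 := by
    rw [dotProduct]
    calc ‖∑ i, star x i * (M *ᵥ x) i‖ ≤ ∑ i, ‖star x i * (M *ᵥ x) i‖ := norm_sum_le _ _
      _ ≤ ∑ i, ‖x i‖ * (δ * ∑ l, ‖x l‖) := by
          apply Finset.sum_le_sum
          intro k _
          rw [norm_mul, Pi.star_apply, norm_star]
          apply mul_le_mul_of_nonneg_left _ (norm_nonneg _)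
          calc ‖(M *ᵥ x) k‖ = ‖∑ l, M k l * x l‖ := by rw [Matrix.mulVec, dotProduct]
            _ ≤ ∑ l, ‖M k l * x l‖ := norm_sum_le _ _
            _ ≤ ∑ l, δ * ‖x l‖ := by
                apply Finset.sum_le_sum
                intro l _
                rw [norm_mul]
                exact mul_le_mul_of_nonneg_right (h k l) (norm_nonneg _)
            _ = δ * ∑ l, ‖x l‖ := by rw [Finset.mul_sum]
      _ = δ * (∑ i, ‖x i‖)^2 := by rw [← Finset.sum_mul]; ring
  refine step1.trans (mul_le_mul_of_nonneg_left ?_ hδ)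
  have := sq_sum_le_card_mul_sum_sq (s := (Finset.univ : Finset (Fin n)))
    (f := fun i => ‖x i‖)
  simpa [Finset.card_univ] using this

lemma entry_mul_mul_bound (P Q R : Matrix (Fin n) (Fin n) ℂ) {a M : ℝ} (ha : 0 ≤ a)
    (hM : 0 ≤ M) (hP : ∀ k l, ‖P k l‖ ≤ a) (hQ : ∀ k l, ‖Q k l‖ ≤ M)
    (hR : ∀ k l, ‖R k l‖ ≤ a) (i j : Fin n) :
    ‖(P * Q * R) i j‖ ≤ (n:ℝ)^2 * (a * M * a) := by
  have hPQ : ∀ k l, ‖(P * Q) k l‖ ≤ (n:ℝ) * (a * M) := by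
    intro k l
    rw [Matrix.mul_apply]
    calc ‖∑ m, P k m * Q m l‖ ≤ ∑ m, ‖P k m * Q m l‖ := norm_sum_le _ _
      _ ≤ ∑ _m : Fin n, a * M := by
          apply Finset.sum_le_sum
          intro m _
          rw [norm_mul]
          exact mul_le_mul (hP k m) (hQ m l) (norm_nonneg _) ha
      _ = (n:ℝ) * (a * M) := by
          rw [Finset.sum_const, Finset.card_univ, Fintype.card_fin, nsmul_eq_mul]
  rw [Matrix.mul_apply]
  calc ‖∑ l, (P * Q) i l * R l j‖ ≤ ∑ l, ‖(P * Q) i l * R l j‖ := norm_sum_le _ _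
    _ ≤ ∑ _l : Fin n, ((n:ℝ) * (a * M)) * a := by
        apply Finset.sum_le_sum
        intro l _
        rw [norm_mul]
        exact mul_le_mul (hPQ i l) (hR l j) (norm_nonneg _) (by positivity)
    _ = (n:ℝ)^2 * (a * M * a) := by
        rw [Finset.sum_const, Finset.card_univ, Fintype.card_fin, nsmul_eq_mul]
        ring

end InvDeriv

end DerivOpLogAux

open MeasureTheory
open scoped ComplexOrder

open Matrix in
/-- Lemma 3 (general form): if `t ↦ g t` is a continuously differentiable family of
strictly positive self-adjoint operators on a finite-dimensional Hilbert space, with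
derivative `g'`, then `d/dt log g(t) = ∫₀^∞ (s + g t)⁻¹ · g' t · (s + g t)⁻¹ ds`
(entrywise, hence in operator norm). -/
theorem deriv_opLog (n : ℕ) (g g' : ℝ → Matrix (Fin n) (Fin n) ℂ)
    (hpos : ∀ t, (g t).PosDef)
    (hderiv : ∀ t i j, HasDerivAt (fun u => g u i j) (g' t i j) t)
    (hcont : ∀ i j, Continuous fun t => g' t i j) :
    ∀ t i j, HasDerivAt (fun u => cfc Real.log (g u) i j)
      (∫ s in Set.Ioi (0 : ℝ),
        (((s : ℂ) • 1 + g t)⁻¹ * g' t * ((s : ℂ) • 1 + g t)⁻¹) i j) t := by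
  classical
  intro t i j
  have hn : 0 < n := i.pos
  have hn' : (0:ℝ) < n := by exact_mod_cast hn
  -- minimum eigenvalue of `g t`
  have hne : (Finset.univ : Finset (Fin n)).Nonempty := ⟨i, Finset.mem_univ i⟩
  set cmin : ℝ := Finset.univ.inf' hne (hpos t).isHermitian.eigenvalues with hcmin_def
  have hcmin : 0 < cmin := by
    rw [hcmin_def, Finset.lt_inf'_iff]
    exact fun k _ => (hpos t).eigenvalues_pos k
  set c : ℝ := cmin / 2 with hc_def
  have hc : 0 < c := by rw [hc_def]; linarith
  -- quadratic form lower bound for `g t`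
  have hq : ∀ x : Fin n → ℂ, cmin * ∑ i, ‖x i‖^2
      ≤ (dotProduct (star x) (g t *ᵥ x)).re :=
    DerivOpLogAux.quad_form_lower (hpos t).isHermitian hcmin.le
      (fun k => Finset.inf'_le _ (Finset.mem_univ k))
  -- entries of `g u` close to those of `g t` near `t`
  have hev : ∀ᶠ u in nhds t, ∀ k l : Fin n, ‖g u k l - g t k l‖ < c / n := by
    rw [Filter.eventually_all]
    intro k
    rw [Filter.eventually_all]
    intro l
    have hct : ContinuousAt (fun u => g u k l) t := (hderiv t k l).continuousAt
    have hmem := hct.tendsto (Metric.ball_mem_nhds (g t k l) (by positivity : (0:ℝ) < c / n))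
    filter_upwards [hmem] with u hu
    rwa [Set.mem_preimage, Metric.mem_ball, dist_eq_norm] at hu
  obtain ⟨ε₀, hε₀, hball₀⟩ := Metric.eventually_nhds_iff.1 hev
  -- bound on the entries of `g'` on the closed unit ball around `t`
  obtain ⟨C, hC⟩ := (isCompact_closedBall t 1).exists_bound_of_continuousOn
    (f := fun u => fun kl : Fin n × Fin n => g' u kl.1 kl.2)
    (Continuous.continuousOn (by continuity))
  set M : ℝ := max C 0 with hM_def
  have hM : 0 ≤ M := le_max_right _ _
  have hM' : ∀ u ∈ Metric.closedBall t 1, ∀ k l : Fin n, ‖g' u k l‖ ≤ M := by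
    intro u hu k l
    calc ‖g' u k l‖ = ‖(fun kl : Fin n × Fin n => g' u kl.1 kl.2) (k, l)‖ := rfl
      _ ≤ ‖fun kl : Fin n × Fin n => g' u kl.1 kl.2‖ :=
          norm_le_pi_norm (f := fun kl : Fin n × Fin n => g' u kl.1 kl.2) (k, l)
      _ ≤ C := hC u hu
      _ ≤ M := le_max_left _ _
  set ε : ℝ := min ε₀ 1 with hε_def
  have hε : 0 < ε := lt_min hε₀ one_pos
  -- eigenvalue lower bound on the ball
  have heig : ∀ u ∈ Metric.ball t ε, ∀ k, c ≤ (hpos u).isHermitian.eigenvalues k := by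
    intro u hu
    apply DerivOpLogAux.eigenvalue_lower (hpos u).isHermitian
    intro x
    have hclose : ∀ k l : Fin n, ‖(g u - g t) k l‖ ≤ c / n := by
      intro k l
      rw [Matrix.sub_apply]
      exact (hball₀ (lt_of_lt_of_le (Metric.mem_ball.1 hu) (min_le_left _ _)) k l).le
    have hpert := DerivOpLogAux.quad_abs_le (g u - g t) (by positivity) hclose x
    have hre : |(dotProduct (star x) ((g u - g t) *ᵥ x)).re|
        ≤ (c / n) * ((n:ℝ) * ∑ i, ‖x i‖^2) :=
      (Complex.abs_re_le_norm _).trans hpert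
    have hgu : g u = g t + (g u - g t) := by rw [add_comm, sub_add_cancel]
    have hsplit : dotProduct (star x) (g u *ᵥ x)
        = dotProduct (star x) (g t *ᵥ x)
          + dotProduct (star x) ((g u - g t) *ᵥ x) := by
      conv_lhs => rw [hgu]
      rw [Matrix.add_mulVec, dotProduct_add]
    have h1 := hq x
    have h2 : (c / n) * ((n:ℝ) * ∑ i, ‖x i‖^2) = c * ∑ i, ‖x i‖^2 := by
      field_simp
    rw [hsplit, Complex.add_re]
    have h3 := abs_le.1 hre
    have : cmin = 2 * c := by rw [hc_def]; ring
    nlinarith [h3.1, h3.2]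
  -- invertibility of the shifted matrices
  have hunit : ∀ (u : ℝ) (s : ℝ), 0 ≤ s → IsUnit ((s:ℂ) • 1 + g u) := by
    intro u s hs
    have h1 : ((s:ℂ) • (1 : Matrix (Fin n) (Fin n) ℂ)).PosSemidef := by
      rw [Matrix.smul_one_eq_diagonal]
      exact Matrix.PosSemidef.diagonal (fun k => by
        simpa using (Complex.zero_le_real).2 hs)
    exact (Matrix.PosDef.posSemidef_add h1 (hpos u)).isUnit
  -- continuity of shifted-matrix entries in `s`
  have hentry_cont : ∀ (u : ℝ) (k l : Fin n),
      Continuous (fun s' : ℝ => ((s':ℂ) • (1:Matrix (Fin n) (Fin n) ℂ) + g u) k l) := by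
    intro u k l
    simp only [Matrix.add_apply, Matrix.smul_apply, smul_eq_mul]
    exact (Complex.continuous_ofReal.mul continuous_const).add continuous_const
  -- the parametric family
  set F : ℝ → ℝ → ℂ := fun u s =>
    ((((s+1)⁻¹ : ℝ) : ℂ) • (1 : Matrix (Fin n) (Fin n) ℂ) - ((s:ℂ) • 1 + g u)⁻¹) i j with hF_def
  set F' : ℝ → ℝ → ℂ := fun u s =>
    (((s:ℂ) • 1 + g u)⁻¹ * g' u * ((s:ℂ) • 1 + g u)⁻¹) i j with hF'_def
  set bound : ℝ → ℝ := fun s => (n:ℝ)^2 * (((n:ℝ) * (s + c)⁻¹) * M * ((n:ℝ) * (s + c)⁻¹))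
    with hbound_def
  -- a.e. measurability of each `F u`
  have hF_meas : ∀ u : ℝ, AEStronglyMeasurable (F u) (volume.restrict (Set.Ioi 0)) := by
    intro u
    apply ContinuousOn.aestronglyMeasurable _ measurableSet_Ioi
    intro s hs
    have hs' : (0:ℝ) < s := hs
    apply ContinuousAt.continuousWithinAt
    have h1 : ContinuousAt (fun s' : ℝ => ((((s'+1)⁻¹ : ℝ) : ℂ)
        • (1 : Matrix (Fin n) (Fin n) ℂ)) i j) s := by
      simp only [Matrix.smul_apply, smul_eq_mul]
      apply ContinuousAt.mul _ continuousAt_const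
      exact Complex.continuous_ofReal.continuousAt.comp
        (((continuousAt_id.add continuousAt_const).inv₀ (by show s + 1 ≠ 0; positivity)))
    have h2 : ContinuousAt (fun s' : ℝ => ((s':ℂ) • 1 + g u)⁻¹ i j) s :=
      DerivOpLogAux.continuousAt_inv_entry
        (fun k l => (hentry_cont u k l).continuousAt) (hunit u s hs'.le) i j
    exact h1.sub h2
  -- integrability of `F t`
  have hF_int : Integrable (F t) (volume.restrict (Set.Ioi 0)) :=
    DerivOpLogAux.integrableOn_entry (hpos t) i j
  -- measurability of `F' t`
  have hF'_meas : AEStronglyMeasurable (F' t) (volume.restrict (Set.Ioi 0)) := by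
    apply ContinuousOn.aestronglyMeasurable _ measurableSet_Ioi
    intro s hs
    have hs' : (0:ℝ) < s := hs
    apply ContinuousAt.continuousWithinAt
    have hP : ContinuousAt (fun s' : ℝ => ((s':ℂ) • 1 + g t)⁻¹) s :=
      DerivOpLogAux.continuousAt_matrix_inv'
        (fun k l => (hentry_cont t k l).continuousAt) (hunit t s hs'.le)
    have hmat : ContinuousAt (fun s' : ℝ =>
        ((s':ℂ) • 1 + g t)⁻¹ * g' t * ((s':ℂ) • 1 + g t)⁻¹) s :=
      (hP.mul continuousAt_const).mul hP
    exact (((continuous_apply j).comp (continuous_apply i)).continuousAt).comp hmat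
  -- the uniform bound
  have h_bound : ∀ᵐ s ∂(volume.restrict (Set.Ioi 0)),
      ∀ u ∈ Metric.ball t ε, ‖F' u s‖ ≤ bound s := by
    filter_upwards [ae_restrict_mem measurableSet_Ioi] with s hs
    intro u hu
    have hs' : (0:ℝ) < s := hs
    have ha : (0:ℝ) ≤ (n:ℝ) * (s + c)⁻¹ := by positivity
    have hinv_bound : ∀ k l : Fin n, ‖(((s:ℂ) • 1 + g u)⁻¹) k l‖ ≤ (n:ℝ) * (s + c)⁻¹ :=
      fun k l => DerivOpLogAux.shift_inv_entry_bound (hpos u).isHermitian hc hs'.le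
        (heig u hu) k l
    have hg'_bound : ∀ k l : Fin n, ‖g' u k l‖ ≤ M := by
      intro k l
      apply hM' u _ k l
      have h1 : dist u t < ε := Metric.mem_ball.1 hu
      have h2 : ε ≤ 1 := min_le_right _ _
      exact Metric.mem_closedBall.2 (by linarith)
    exact DerivOpLogAux.entry_mul_mul_bound _ _ _ ha hM hinv_bound hg'_bound hinv_bound i j
  -- integrability of the bound
  have hbound_int : Integrable bound (volume.restrict (Set.Ioi 0)) := by
    have heq : bound = fun s => ((n:ℝ)^2 * (n:ℝ) * M * (n:ℝ)) * ((s + c)⁻¹)^2 := by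
      funext s
      rw [hbound_def]
      ring
    rw [heq]
    exact (DerivOpLogAux.integrableOn_inv_sq hc).const_mul _
  -- differentiability in the parameter
  have h_diff : ∀ᵐ s ∂(volume.restrict (Set.Ioi 0)),
      ∀ u ∈ Metric.ball t ε, HasDerivAt (fun v => F v s) (F' u s) u := by
    filter_upwards [ae_restrict_mem measurableSet_Ioi] with s hs
    intro u _
    have hs' : (0:ℝ) < s := hs
    have hd : ∀ k l : Fin n, HasDerivAt (fun v => ((s:ℂ) • 1 + g v) k l) (g' u k l) u := by
      intro k l
      have heq : (fun v => ((s:ℂ) • 1 + g v) k l)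
          = fun v => (((s:ℂ) • (1:Matrix (Fin n) (Fin n) ℂ)) k l) + g v k l := by
        funext v
        rw [Matrix.add_apply]
      rw [heq]
      exact (hderiv u k l).const_add _
    have hinv := DerivOpLogAux.hasDerivAt_inv_entry (B := fun v => (s:ℂ) • 1 + g v)
      (B' := g' u) (t := u) (fun v => hunit v s hs'.le) hd i j
    have hder := hinv.const_sub (((((s+1)⁻¹ : ℝ) : ℂ) • (1 : Matrix (Fin n) (Fin n) ℂ)) i j)
    have heqF : (fun v => F v s) = fun v =>
        ((((s+1)⁻¹ : ℝ) : ℂ) • (1 : Matrix (Fin n) (Fin n) ℂ)) i j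
          - ((s:ℂ) • 1 + g v)⁻¹ i j := by
      funext v
      simp only [hF_def, Matrix.sub_apply]
    have hval : F' u s = -((-(((s:ℂ) • 1 + g u)⁻¹ * g' u * ((s:ℂ) • 1 + g u)⁻¹)) i j) := by
      simp [hF'_def, Matrix.neg_apply]
    rw [heqF, hval]
    exact hder
  obtain ⟨-, hder⟩ := hasDerivAt_integral_of_dominated_loc_of_deriv_le (Metric.ball_mem_nhds t hε)
    (Filter.Eventually.of_forall hF_meas) hF_int hF'_meas h_bound hbound_int h_diff
  have hfun : (fun u => cfc Real.log (g u) i j) = fun u => ∫ s in Set.Ioi (0:ℝ), F u s :=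
    funext fun u => DerivOpLogAux.log_entry_rep (hpos u) i j
  rw [hfun]
  exact hder
end

section
/- Let L be the generator of a continuous semigroup of positive, trace-preserving, trace-symmetric maps on B(h), h finite-dimensional. Then for every strictly positive f and every q > 1, −tr(f^{q/2} L(f^{q/2})) ≤ (q²/(4(q−1))) · (−tr(f^{q−1} L f)). -/
open scoped ComplexOrder

noncomputable section

/-- `f^p` (real power) via functional calculus. -/
def rpowM {n : ℕ} (f : Matrix (Fin n) (Fin n) ℂ) (p : ℝ) : Matrix (Fin n) (Fin n) ℂ :=
  cfc (fun x : ℝ => x ^ p) f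

section Aux

open intervalIntegral Matrix


open intervalIntegral

/-- Cauchy–Schwarz for an interval integral of a continuous positive power. -/
lemma cs_step {b a p : ℝ} (hb : 0 < b) (hba : b < a) :
    (∫ x in b..a, x ^ p) ^ 2 ≤ (a - b) * ∫ x in b..a, x ^ (2 * p) := by
  have hpos : ∀ x ∈ Set.uIcc b a, x ≠ 0 := by
    intro x hx
    rw [Set.uIcc_of_le hba.le] at hx
    exact (lt_of_lt_of_le hb hx.1).ne'
  have hcont : ContinuousOn (fun x : ℝ => x ^ p) (Set.uIcc b a) :=
    ContinuousOn.rpow_const continuousOn_id (fun x hx => Or.inl (hpos x hx))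
  have hint : IntervalIntegrable (fun x : ℝ => x ^ p) MeasureTheory.volume b a :=
    hcont.intervalIntegrable
  have hcont2 : ContinuousOn (fun x : ℝ => (x ^ p) ^ 2) (Set.uIcc b a) := hcont.pow 2
  have hint2 : IntervalIntegrable (fun x : ℝ => (x ^ p) ^ 2) MeasureTheory.volume b a :=
    hcont2.intervalIntegrable
  set I1 := ∫ x in b..a, x ^ p with hI1
  set c : ℝ := I1 / (a - b) with hc
  have hab : (0:ℝ) < a - b := by linarith
  have key : (0:ℝ) ≤ ∫ x in b..a, ((x ^ p) ^ 2 - 2 * c * x ^ p + c ^ 2) := by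
    have : ∀ x ∈ Set.Icc b a, (0:ℝ) ≤ (x ^ p) ^ 2 - 2 * c * x ^ p + c ^ 2 := by
      intro x _
      have : (x ^ p - c) ^ 2 = (x ^ p) ^ 2 - 2 * c * x ^ p + c ^ 2 := by ring
      rw [← this]; positivity
    exact intervalIntegral.integral_nonneg hba.le this
  have hsplit : (∫ x in b..a, ((x ^ p) ^ 2 - 2 * c * x ^ p + c ^ 2))
      = (∫ x in b..a, (x ^ p) ^ 2) - 2 * c * I1 + c ^ 2 * (a - b) := by
    rw [intervalIntegral.integral_add ((hint2.sub (hint.const_mul (2*c)))) intervalIntegrable_const,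
      intervalIntegral.integral_sub hint2 (hint.const_mul (2*c)),
      intervalIntegral.integral_const_mul, intervalIntegral.integral_const]
    rw [smul_eq_mul]; ring
  have hsq : (∫ x in b..a, (x ^ p) ^ 2) = ∫ x in b..a, x ^ (2 * p) := by
    apply intervalIntegral.integral_congr
    intro x hx
    have hx0 : 0 < x := by
      rw [Set.uIcc_of_le hba.le] at hx; exact lt_of_lt_of_le hb hx.1
    show (x ^ p) ^ 2 = x ^ (2 * p)
    rw [← Real.rpow_natCast (x ^ p) 2, ← Real.rpow_mul hx0.le]
    norm_num [mul_comm]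
  rw [hsplit, hsq] at key
  have : 2 * c * I1 - c ^ 2 * (a - b) = I1 ^ 2 / (a - b) := by
    rw [hc]; field_simp; ring
  have h5 : I1 ^ 2 / (a - b) ≤ ∫ x in b..a, x ^ (2 * p) := by linarith
  have h6 := (div_le_iff₀ hab).mp h5
  linarith [h6, mul_comm (∫ x in b..a, x ^ (2 * p)) (a - b)]

lemma scalar_ineq_aux {q : ℝ} (hq : 1 < q) {a b : ℝ} (ha : 0 < a) (hb : 0 < b) (h : b < a) :
    (a ^ (q/2) - b ^ (q/2)) ^ 2 ≤ q^2 / (4*(q-1)) * ((a ^ (q-1) - b ^ (q-1)) * (a - b)) := by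
  have hq1 : (0:ℝ) < q - 1 := by linarith
  have hI1 : (∫ x in b..a, x ^ (q/2 - 1)) = (a ^ (q/2) - b ^ (q/2)) / (q/2) := by
    rw [integral_rpow (Or.inl (by linarith))]
    norm_num
  have hI2 : (∫ x in b..a, x ^ (2 * (q/2 - 1))) = (a ^ (q-1) - b ^ (q-1)) / (q-1) := by
    have h2 : 2 * (q/2 - 1) = q - 2 := by ring
    rw [h2, integral_rpow (Or.inl (by linarith))]
    have h3 : q - 2 + 1 = q - 1 := by ring
    rw [h3]
  have hcs := cs_step (p := q/2 - 1) hb h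
  rw [hI1, hI2] at hcs
  have hq0 : (0:ℝ) < q := by linarith
  have hab : (0:ℝ) < a - b := by linarith
  have hh : ((a ^ (q/2) - b ^ (q/2)) / (q/2)) ^ 2
      = (a ^ (q/2) - b ^ (q/2)) ^ 2 * (4 / q^2) := by
    field_simp; ring
  rw [hh] at hcs
  have h4q : (0:ℝ) < 4 / q^2 := by positivity
  calc (a ^ (q/2) - b ^ (q/2)) ^ 2
      = ((a ^ (q/2) - b ^ (q/2)) ^ 2 * (4 / q^2)) * (q^2/4) := by field_simp
    _ ≤ ((a - b) * ((a ^ (q-1) - b ^ (q-1)) / (q-1))) * (q^2/4) := by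
        apply mul_le_mul_of_nonneg_right hcs (by positivity)
    _ = q^2 / (4*(q-1)) * ((a ^ (q-1) - b ^ (q-1)) * (a - b)) := by
        field_simp

/-- The scalar inequality `(a^{q/2}-b^{q/2})² ≤ q²/(4(q-1)) (a^{q-1}-b^{q-1})(a-b)`. -/
lemma scalar_ineq {q : ℝ} (hq : 1 < q) {a b : ℝ} (ha : 0 < a) (hb : 0 < b) :
    (a ^ (q/2) - b ^ (q/2)) ^ 2 ≤ q^2 / (4*(q-1)) * ((a ^ (q-1) - b ^ (q-1)) * (a - b)) := by
  have hq1 : (0:ℝ) < q - 1 := by linarith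
  -- reduce to the case b < a
  rcases lt_trichotomy a b with h | h | h
  · have := scalar_ineq_aux hq hb ha h
    calc (a ^ (q/2) - b ^ (q/2)) ^ 2 = (b ^ (q/2) - a ^ (q/2)) ^ 2 := by ring
    _ ≤ q^2 / (4*(q-1)) * ((b ^ (q-1) - a ^ (q-1)) * (b - a)) := this
    _ = q^2 / (4*(q-1)) * ((a ^ (q-1) - b ^ (q-1)) * (a - b)) := by ring
  · subst h; simp
  · exact scalar_ineq_aux hq ha hb h


lemma key_sum {n : ℕ} (K : Fin n → Fin n → ℝ) (C : ℝ)
    (hpos : ∀ i j, 0 ≤ K i j)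
    (hrow : ∀ i, ∑ j, K i j = 1) (hcol : ∀ j, ∑ i, K i j = 1)
    (hsym : ∀ i j, K i j = K j i)
    (A B lam : Fin n → ℝ)
    (hpt : ∀ i j, (A i - A j)^2 ≤ C * ((B i - B j) * (lam i - lam j))) :
    (∑ i, A i * A i) - (∑ i, ∑ j, K i j * (A i * A j))
      ≤ C * ((∑ i, B i * lam i) - (∑ i, ∑ j, K i j * (B i * lam j))) := by
  have rowsum : ∀ g : Fin n → ℝ, ∑ i, ∑ j, K i j * g i = ∑ i, g i := by
    intro g
    refine Finset.sum_congr rfl fun i _ => ?_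
    rw [← Finset.sum_mul, hrow i, one_mul]
  have colsum : ∀ g : Fin n → ℝ, ∑ i, ∑ j, K i j * g j = ∑ i, g i := by
    intro g
    rw [Finset.sum_comm]
    refine Finset.sum_congr rfl fun j _ => ?_
    rw [← Finset.sum_mul, hcol j, one_mul]
  have hcross : ∑ i, ∑ j, K i j * (B j * lam i) = ∑ i, ∑ j, K i j * (B i * lam j) := by
    rw [Finset.sum_comm]
    refine Finset.sum_congr rfl fun i _ => Finset.sum_congr rfl fun j _ => ?_
    rw [hsym j i]
  have eA : ∑ i, ∑ j, K i j * (A i - A j)^2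
      = 2 * ((∑ i, A i * A i) - (∑ i, ∑ j, K i j * (A i * A j))) := by
    have e1 : ∀ i j, K i j * (A i - A j)^2
        = (K i j * (A i * A i) + K i j * (A j * A j)) - 2 * (K i j * (A i * A j)) := by
      intro i j; ring
    calc ∑ i, ∑ j, K i j * (A i - A j)^2
        = ∑ i, ∑ j, ((K i j * (A i * A i) + K i j * (A j * A j)) - 2 * (K i j * (A i * A j))) := by
          exact Finset.sum_congr rfl fun i _ => Finset.sum_congr rfl fun j _ => e1 i j
      _ = ((∑ i, ∑ j, K i j * (A i * A i)) + (∑ i, ∑ j, K i j * (A j * A j)))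
            - 2 * (∑ i, ∑ j, K i j * (A i * A j)) := by
          simp [Finset.sum_add_distrib, Finset.sum_sub_distrib, Finset.mul_sum]
      _ = 2 * ((∑ i, A i * A i) - (∑ i, ∑ j, K i j * (A i * A j))) := by
          rw [rowsum (fun i => A i * A i), colsum (fun j => A j * A j)]; ring
  have eB : ∑ i, ∑ j, K i j * ((B i - B j) * (lam i - lam j))
      = 2 * ((∑ i, B i * lam i) - (∑ i, ∑ j, K i j * (B i * lam j))) := by
    have e1 : ∀ i j, K i j * ((B i - B j) * (lam i - lam j))
        = (K i j * (B i * lam i) + K i j * (B j * lam j))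
          - (K i j * (B i * lam j) + K i j * (B j * lam i)) := by
      intro i j; ring
    calc ∑ i, ∑ j, K i j * ((B i - B j) * (lam i - lam j))
        = ∑ i, ∑ j, ((K i j * (B i * lam i) + K i j * (B j * lam j))
            - (K i j * (B i * lam j) + K i j * (B j * lam i))) := by
          exact Finset.sum_congr rfl fun i _ => Finset.sum_congr rfl fun j _ => e1 i j
      _ = ((∑ i, ∑ j, K i j * (B i * lam i)) + (∑ i, ∑ j, K i j * (B j * lam j)))
            - ((∑ i, ∑ j, K i j * (B i * lam j)) + (∑ i, ∑ j, K i j * (B j * lam i))) := by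
          simp [Finset.sum_add_distrib, Finset.sum_sub_distrib]
      _ = 2 * ((∑ i, B i * lam i) - (∑ i, ∑ j, K i j * (B i * lam j))) := by
          rw [rowsum (fun i => B i * lam i), colsum (fun j => B j * lam j), hcross]; ring
  have step : ∑ i, ∑ j, K i j * (A i - A j)^2
      ≤ ∑ i, ∑ j, K i j * (C * ((B i - B j) * (lam i - lam j))) :=
    Finset.sum_le_sum fun i _ => Finset.sum_le_sum fun j _ =>
      mul_le_mul_of_nonneg_left (hpt i j) (hpos i j)
  have pullC : ∑ i, ∑ j, K i j * (C * ((B i - B j) * (lam i - lam j)))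
      = C * ∑ i, ∑ j, K i j * ((B i - B j) * (lam i - lam j)) := by
    rw [Finset.mul_sum]
    refine Finset.sum_congr rfl fun i _ => ?_
    rw [Finset.mul_sum]
    exact Finset.sum_congr rfl fun j _ => by ring
  rw [eA, pullC, eB] at step
  linarith


namespace TraceRC

variable {n : ℕ}

/-- the `i`-th column of `U`. -/
def colv (U : Matrix (Fin n) (Fin n) ℂ) (i : Fin n) : Fin n → ℂ := fun a => U a i

/-- rank-one projection onto the `i`-th column of `U`. -/
def projM (U : Matrix (Fin n) (Fin n) ℂ) (i : Fin n) : Matrix (Fin n) (Fin n) ℂ :=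
  Matrix.vecMulVec (colv U i) (star (colv U i))

lemma trace_projM_mul (U : Matrix (Fin n) (Fin n) ℂ) (i : Fin n)
    (X : Matrix (Fin n) (Fin n) ℂ) :
    (projM U i * X).trace = dotProduct (star (colv U i)) (X *ᵥ colv U i) := by
  simp only [Matrix.trace, Matrix.diag, Matrix.mul_apply, projM, Matrix.vecMulVec_apply,
    dotProduct, Matrix.mulVec, Pi.star_apply]
  rw [Finset.sum_comm]
  refine Finset.sum_congr rfl fun b _ => ?_
  rw [Finset.mul_sum]
  refine Finset.sum_congr rfl fun a _ => ?_
  ring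

lemma conj_diag_eq_sum (U : Matrix (Fin n) (Fin n) ℂ) (d : Fin n → ℂ) :
    U * Matrix.diagonal d * star U = ∑ j, d j • projM U j := by
  ext a b
  rw [Matrix.mul_apply]
  simp only [Matrix.mul_diagonal, Matrix.star_apply, RCLike.star_def, Matrix.sum_apply,
    Matrix.smul_apply, projM, Matrix.vecMulVec_apply, colv, smul_eq_mul, Pi.star_apply]
  exact Finset.sum_congr rfl fun j _ => by ring

lemma sum_projM (U : Matrix (Fin n) (Fin n) ℂ) (hU2 : U * star U = 1) :
    ∑ j, projM U j = 1 := by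
  ext a b
  have := congrFun (congrFun hU2 a) b
  simp only [Matrix.mul_apply, Matrix.star_apply, RCLike.star_def] at this
  simpa [Matrix.sum_apply, projM, Matrix.vecMulVec_apply, colv] using this

lemma projM_posSemidef (U : Matrix (Fin n) (Fin n) ℂ) (i : Fin n) :
    (projM U i).PosSemidef := by
  rw [Matrix.posSemidef_iff_dotProduct_mulVec]
  constructor
  · ext a b
    simp [projM, Matrix.vecMulVec_apply, Matrix.conjTranspose_apply, mul_comm]
  · intro x
    have : dotProduct (star x) (projM U i *ᵥ x)
        = star (dotProduct (star (colv U i)) x)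
            * dotProduct (star (colv U i)) x := by
      simp only [dotProduct, Matrix.mulVec, projM, Matrix.vecMulVec_apply,
        Pi.star_apply, star_sum, star_mul', star_star, Finset.mul_sum, Finset.sum_mul]
      rw [Finset.sum_comm]
      refine Finset.sum_congr rfl fun a _ => Finset.sum_congr rfl fun b _ => by ring
    rw [this]
    exact star_mul_self_nonneg _

lemma trace_projM (U : Matrix (Fin n) (Fin n) ℂ) (hU1 : star U * U = 1) (i : Fin n) :
    (projM U i).trace = 1 := by
  have := congrFun (congrFun hU1 i) i
  simp only [Matrix.mul_apply, Matrix.star_apply, RCLike.star_def, Matrix.one_apply_eq] at this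
  simpa [Matrix.trace, Matrix.diag, projM, Matrix.vecMulVec_apply, colv, mul_comm] using this


lemma trace_expand (U : Matrix (Fin n) (Fin n) ℂ)
    (S : Matrix (Fin n) (Fin n) ℂ →ₗ[ℂ] Matrix (Fin n) (Fin n) ℂ) (a b : Fin n → ℝ) :
    (((U * Matrix.diagonal (fun i => (a i : ℂ)) * star U)
        * S (U * Matrix.diagonal (fun i => (b i : ℂ)) * star U)).trace).re
      = ∑ i, ∑ j, a i * b j * ((projM U i * S (projM U j)).trace).re := by
  rw [conj_diag_eq_sum, conj_diag_eq_sum, map_sum]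
  simp only [_root_.map_smul]
  rw [Finset.sum_mul_sum, Matrix.trace_sum]
  simp only [Matrix.trace_sum]
  rw [Complex.re_sum]
  refine Finset.sum_congr rfl fun i _ => ?_
  rw [Complex.re_sum]
  refine Finset.sum_congr rfl fun j _ => ?_
  rw [smul_mul_assoc, mul_smul_comm, Matrix.trace_smul, Matrix.trace_smul]
  simp only [smul_eq_mul, ← mul_assoc, ← Complex.ofReal_mul]
  rw [Complex.re_ofReal_mul]

lemma trace_diag_mul_diag (U : Matrix (Fin n) (Fin n) ℂ) (hU1 : star U * U = 1)
    (a b : Fin n → ℝ) :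
    (((U * Matrix.diagonal (fun i => (a i : ℂ)) * star U)
        * (U * Matrix.diagonal (fun i => (b i : ℂ)) * star U)).trace).re
      = ∑ i, a i * b i := by
  have h : (U * Matrix.diagonal (fun i => (a i : ℂ)) * star U)
        * (U * Matrix.diagonal (fun i => (b i : ℂ)) * star U)
      = U * (Matrix.diagonal (fun i => (a i : ℂ)) * Matrix.diagonal (fun i => (b i : ℂ)))
        * star U := by
    calc (U * Matrix.diagonal (fun i => (a i : ℂ)) * star U)
        * (U * Matrix.diagonal (fun i => (b i : ℂ)) * star U)
        = U * Matrix.diagonal (fun i => (a i : ℂ)) * ((star U * U)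
            * (Matrix.diagonal (fun i => (b i : ℂ)) * star U)) := by
          simp only [Matrix.mul_assoc]
      _ = _ := by rw [hU1, one_mul]; simp only [Matrix.mul_assoc]
  rw [h, Matrix.trace_mul_cycle, ← Matrix.mul_assoc, hU1, one_mul,
    Matrix.diagonal_mul_diagonal, Matrix.trace_diagonal]
  rw [Complex.re_sum]
  refine Finset.sum_congr rfl fun i _ => ?_
  simp [← Complex.ofReal_mul]

/-- Step B : the inequality for a single positive trace-preserving trace-symmetric map. -/
lemma stepB (S : Matrix (Fin n) (Fin n) ℂ →ₗ[ℂ] Matrix (Fin n) (Fin n) ℂ)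
    (hSpos : ∀ x : Matrix (Fin n) (Fin n) ℂ, x.PosSemidef → (S x).PosSemidef)
    (hStr : ∀ x : Matrix (Fin n) (Fin n) ℂ, (S x).trace = x.trace)
    (hSsym : ∀ x y : Matrix (Fin n) (Fin n) ℂ, (S x * y).trace = (x * S y).trace)
    (f : Matrix (Fin n) (Fin n) ℂ) (hf : f.PosDef) (q : ℝ) (hq : 1 < q) :
    ((rpowM f (q/2) * rpowM f (q/2)).trace).re - ((rpowM f (q/2) * S (rpowM f (q/2))).trace).re
      ≤ q^2 / (4*(q-1)) *
        (((rpowM f (q-1) * f).trace).re - ((rpowM f (q-1) * S f).trace).re) := by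
  have hH : f.IsHermitian := hf.1
  set U : Matrix (Fin n) (Fin n) ℂ := (Matrix.IsHermitian.eigenvectorUnitary hH : Matrix (Fin n) (Fin n) ℂ) with hUdef
  have hU2 : U * star U = 1 :=
    Matrix.mem_unitaryGroup_iff.mp (Matrix.IsHermitian.eigenvectorUnitary hH).2
  have hU1 : star U * U = 1 :=
    Matrix.mem_unitaryGroup_iff'.mp (Matrix.IsHermitian.eigenvectorUnitary hH).2
  set lam : Fin n → ℝ := hH.eigenvalues with hlam
  have hlampos : ∀ i, 0 < lam i := hf.eigenvalues_pos
  have hg : ∀ p : ℝ, rpowM f p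
      = U * Matrix.diagonal (fun i => ((lam i ^ p : ℝ) : ℂ)) * star U := by
    intro p
    rw [rpowM, hH.cfc_eq]
    rfl
  have hfspec : f = U * Matrix.diagonal (fun i => ((lam i : ℝ) : ℂ)) * star U :=
    hH.spectral_theorem
  set K : Fin n → Fin n → ℝ := fun i j => ((projM U i * S (projM U j)).trace).re with hK
  have hK0 : ∀ i j, 0 ≤ K i j := by
    intro i j
    rw [hK]
    simp only
    rw [trace_projM_mul]
    have := (hSpos (projM U j) (projM_posSemidef U j)).re_dotProduct_nonneg (colv U i)
    simpa using this
  have hKrow : ∀ i, ∑ j, K i j = 1 := by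
    intro i
    have : ∑ j, (projM U i * S (projM U j)).trace
        = (projM U i * S (∑ j, projM U j)).trace := by
      rw [map_sum, Finset.mul_sum, Matrix.trace_sum]
    have h2 : ∑ j, ((projM U i * S (projM U j)).trace).re
        = ((projM U i * S (∑ j, projM U j)).trace).re := by
      rw [← this, Complex.re_sum]
    rw [hK]; simp only
    rw [h2, sum_projM U hU2, ← hSsym, mul_one, hStr, trace_projM U hU1]
    simp
  have hKcol : ∀ j, ∑ i, K i j = 1 := by
    intro j
    have : ∑ i, (projM U i * S (projM U j)).trace
        = ((∑ i, projM U i) * S (projM U j)).trace := by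
      rw [Finset.sum_mul, Matrix.trace_sum]
    rw [hK]; simp only
    rw [← Complex.re_sum, this, sum_projM U hU2, one_mul, hStr, trace_projM U hU1]
    simp
  have hKsym : ∀ i j, K i j = K j i := by
    intro i j
    rw [hK]; simp only
    rw [← hSsym, Matrix.trace_mul_comm]
  set A : Fin n → ℝ := fun i => lam i ^ (q/2) with hA
  set B : Fin n → ℝ := fun i => lam i ^ (q-1) with hB
  have e1 : ((rpowM f (q/2) * S (rpowM f (q/2))).trace).re
      = ∑ i, ∑ j, A i * A j * K i j := by
    rw [hg (q/2), trace_expand U S A A]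
  have e2 : ((rpowM f (q-1) * S f).trace).re
      = ∑ i, ∑ j, B i * lam j * K i j := by
    conv_lhs => rw [hg (q-1), hfspec]
    rw [trace_expand U S B lam]
  have e3 : ((rpowM f (q/2) * rpowM f (q/2)).trace).re = ∑ i, A i * A i := by
    rw [hg (q/2), trace_diag_mul_diag U hU1 A A]
  have e4 : ((rpowM f (q-1) * f).trace).re = ∑ i, B i * lam i := by
    conv_lhs => rw [hg (q-1), hfspec]
    rw [trace_diag_mul_diag U hU1 B lam]
  rw [e1, e2, e3, e4]
  have hpt : ∀ i j, (A i - A j)^2 ≤ q^2/(4*(q-1)) * ((B i - B j) * (lam i - lam j)) :=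
    fun i j => scalar_ineq hq (hlampos i) (hlampos j)
  have := key_sum K (q^2/(4*(q-1))) hK0 hKrow hKcol hKsym A B lam hpt
  calc (∑ i, A i * A i) - ∑ i, ∑ j, A i * A j * K i j
      = (∑ i, A i * A i) - ∑ i, ∑ j, K i j * (A i * A j) := by
        congr 1
        exact Finset.sum_congr rfl fun i _ => Finset.sum_congr rfl fun j _ => by ring
    _ ≤ q^2/(4*(q-1)) * ((∑ i, B i * lam i) - ∑ i, ∑ j, K i j * (B i * lam j)) := this
    _ = q^2/(4*(q-1)) * ((∑ i, B i * lam i) - ∑ i, ∑ j, B i * lam j * K i j) := by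
        congr 2
        exact Finset.sum_congr rfl fun i _ => Finset.sum_congr rfl fun j _ => by ring


lemma hasDerivAt_trace_re
    (P : ℝ → (Matrix (Fin n) (Fin n) ℂ →ₗ[ℂ] Matrix (Fin n) (Fin n) ℂ))
    (L : Matrix (Fin n) (Fin n) ℂ →ₗ[ℂ] Matrix (Fin n) (Fin n) ℂ)
    (hgen : ∀ (x : Matrix (Fin n) (Fin n) ℂ) (t : ℝ) (i j : Fin n),
      HasDerivAt (fun u => P u x i j) ((L (P t x)) i j) t)
    (x y : Matrix (Fin n) (Fin n) ℂ) (t : ℝ) :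
    HasDerivAt (fun u => ((x * P u y).trace).re) (((x * L (P t y)).trace).re) t := by
  have tr_eq : ∀ M : Matrix (Fin n) (Fin n) ℂ,
      (x * M).trace = ∑ i, ∑ j, x i j * M j i := by
    intro M
    simp [Matrix.trace, Matrix.diag, Matrix.mul_apply]
  have key : HasDerivAt (fun u => ∑ i, ∑ j, x i j * (P u y) j i)
      (∑ i, ∑ j, x i j * (L (P t y)) j i) t :=
    HasDerivAt.fun_sum fun i _ => HasDerivAt.fun_sum fun j _ => (hgen y t j i).const_mul (x i j)
  have h1 : HasDerivAt (fun u => (x * P u y).trace) ((x * L (P t y)).trace) t := by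
    rw [tr_eq]
    have : (fun u => (x * P u y).trace) = fun u => ∑ i, ∑ j, x i j * (P u y) j i :=
      funext fun u => tr_eq (P u y)
    rw [this]
    exact key
  have h2 := (Complex.reCLM.hasFDerivAt.comp_hasDerivAt t h1)
  exact h2

lemma deriv_nonneg_of_min {χ : ℝ → ℝ} {D : ℝ} (hχ : HasDerivAt χ D 0)
    (hmin : ∀ t : ℝ, 0 < t → χ 0 ≤ χ t) : 0 ≤ D := by
  have h1 : HasDerivWithinAt χ D (Set.Ioi 0) 0 := hχ.hasDerivWithinAt
  rw [hasDerivWithinAt_iff_tendsto_slope] at h1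
  have hs : Set.Ioi (0:ℝ) \ {0} = Set.Ioi 0 :=
    Set.diff_singleton_eq_self (by simp)
  rw [hs] at h1
  refine ge_of_tendsto h1 ?_
  filter_upwards [self_mem_nhdsWithin] with t ht
  have ht' : (0:ℝ) < t := ht
  have hsl : slope χ 0 t = (χ t - χ 0) / t := by
    rw [slope_def_field]; rw [div_eq_div_iff (by linarith) (by linarith)]; ring
  rw [hsl]
  exact div_nonneg (by linarith [hmin t ht']) ht'.le


end TraceRC

end Aux

/-- Regularity condition (RC) in the trace case: if `L` generates a continuous
semigroup of positive, trace-preserving, trace-symmetric maps, then for `f > 0`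
and `q > 1`, `−tr(f^{q/2} L(f^{q/2})) ≤ (q²/(4(q−1)))·(−tr(f^{q−1} L f))`. -/
theorem trace_RC (n : ℕ)
    (P : ℝ → (Matrix (Fin n) (Fin n) ℂ →ₗ[ℂ] Matrix (Fin n) (Fin n) ℂ))
    (L : Matrix (Fin n) (Fin n) ℂ →ₗ[ℂ] Matrix (Fin n) (Fin n) ℂ)
    (hP0 : P 0 = LinearMap.id)
    (hPsg : ∀ s t : ℝ, 0 ≤ s → 0 ≤ t → P (s + t) = (P s).comp (P t))
    (hPpos : ∀ t : ℝ, 0 ≤ t → ∀ x : Matrix (Fin n) (Fin n) ℂ,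
      x.PosSemidef → (P t x).PosSemidef)
    (hPtr : ∀ t : ℝ, 0 ≤ t → ∀ x : Matrix (Fin n) (Fin n) ℂ, (P t x).trace = x.trace)
    (hPsym : ∀ t : ℝ, 0 ≤ t → ∀ x y : Matrix (Fin n) (Fin n) ℂ,
      (P t x * y).trace = (x * P t y).trace)
    (hgen : ∀ (x : Matrix (Fin n) (Fin n) ℂ) (t : ℝ) (i j : Fin n),
      HasDerivAt (fun u => P u x i j) ((L (P t x)) i j) t) :
    ∀ f : Matrix (Fin n) (Fin n) ℂ, f.PosDef → ∀ q : ℝ, 1 < q →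
      -((rpowM f (q / 2) * L (rpowM f (q / 2))).trace).re ≤
        q ^ 2 / (4 * (q - 1)) * (-((rpowM f (q - 1) * L f).trace).re) := by
  intro f hf q hq
  set C : ℝ := q^2 / (4*(q-1)) with hC
  set g2 : Matrix (Fin n) (Fin n) ℂ := rpowM f (q/2) with hg2
  set g1 : Matrix (Fin n) (Fin n) ℂ := rpowM f (q-1) with hg1
  set χ : ℝ → ℝ := fun t => ((g2 * P t g2).trace).re - C * ((g1 * P t f).trace).re with hχdef
  have hP0' : ∀ x : Matrix (Fin n) (Fin n) ℂ, P 0 x = x := by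
    intro x; rw [hP0]; rfl
  have hder : HasDerivAt χ
      (((g2 * L g2).trace).re - C * ((g1 * L f).trace).re) 0 := by
    have d1 := TraceRC.hasDerivAt_trace_re P L hgen g2 g2 0
    have d2 := TraceRC.hasDerivAt_trace_re P L hgen g1 f 0
    rw [hP0' g2] at d1
    rw [hP0' f] at d2
    exact d1.sub (d2.const_mul C)
  have hmin : ∀ t : ℝ, 0 < t → χ 0 ≤ χ t := by
    intro t ht
    have hB := TraceRC.stepB (P t) (hPpos t ht.le) (hPtr t ht.le) (hPsym t ht.le) f hf q hq
    have hχ0 : χ 0 = ((g2 * g2).trace).re - C * ((g1 * f).trace).re := by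
      simp only [hχdef, hP0' g2, hP0' f]
    rw [hχ0]
    simp only [hχdef]
    rw [← hg2, ← hg1] at hB
    nlinarith [hB]
  have hD := TraceRC.deriv_nonneg_of_min hder hmin
  have : C * -((g1 * L f).trace).re = -(C * ((g1 * L f).trace).re) := by ring
  rw [hC] at this ⊢
  rw [this]
  linarith [hD]

end
end

section
/- Let L be the generator of a continuous semigroup of positive, trace-preserving, trace-symmetric maps on B(h), h finite-dimensional. Then for every strictly positive f, −4·tr(f^{1/2} L(f^{1/2})) ≤ −tr((log f)·L(f)). -/
open scoped ComplexOrder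

noncomputable section

/-- Operator logarithm via functional calculus. -/
def logM {n : ℕ} (g : Matrix (Fin n) (Fin n) ℂ) : Matrix (Fin n) (Fin n) ℂ :=
  cfc Real.log g

open Matrix Finset

namespace TraceWRCAux

/-! ### Scalar inequalities -/

lemma log_aux {y x : ℝ} (hy : 0 < y) (hxy : y ≤ x) :
    2 * (x - y) ≤ (Real.log x - Real.log y) * (x + y) := by
  set g : ℝ → ℝ := fun t => (Real.log t - Real.log y) * (t + y) - 2 * (t - y) with hg
  have hderiv : ∀ t ∈ Set.Ici y, HasDerivAt g ((t + y)/t + (Real.log t - Real.log y) - 2) t := by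
    intro t ht
    have ht0 : 0 < t := lt_of_lt_of_le hy ht
    have h1 : HasDerivAt (fun t => Real.log t - Real.log y) (1/t) t := by
      simpa using (Real.hasDerivAt_log ht0.ne').sub_const (Real.log y)
    have h2 : HasDerivAt (fun t : ℝ => t + y) 1 t := (hasDerivAt_id t).add_const y
    have h3 := (h1.mul h2).sub (((hasDerivAt_id t).sub_const y).const_mul 2)
    refine HasDerivAt.congr_deriv h3 ?_
    field_simp
  have hnn : ∀ t ∈ interior (Set.Ici y), 0 ≤ (t + y)/t + (Real.log t - Real.log y) - 2 := by
    intro t ht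
    rw [interior_Ici] at ht
    have ht0 : 0 < t := lt_of_lt_of_le hy (le_of_lt ht)
    have hlog : Real.log y - Real.log t ≤ y / t - 1 := by
      have := Real.log_le_sub_one_of_pos (div_pos hy ht0)
      rwa [Real.log_div hy.ne' ht0.ne'] at this
    have : (t + y)/t = 1 + y/t := by field_simp
    linarith
  have hmono : MonotoneOn g (Set.Ici y) := by
    apply monotoneOn_of_deriv_nonneg (convex_Ici y)
    · exact fun t ht => (hderiv t ht).continuousAt.continuousWithinAt
    · exact fun t ht => (hderiv t (interior_subset ht)).differentiableAt.differentiableWithinAt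
    · intro t ht
      rw [(hderiv t (interior_subset ht)).deriv]
      exact hnn t ht
  have h := hmono (Set.self_mem_Ici) (Set.mem_Ici.mpr hxy) hxy
  simp only [hg, sub_self, zero_mul, mul_zero, sub_zero, zero_sub] at h
  linarith

lemma key_scalar {a b : ℝ} (ha : 0 < a) (hb : 0 < b) :
    4 * (a ^ (1/2:ℝ) - b ^ (1/2:ℝ))^2 ≤ (Real.log a - Real.log b) * (a - b) := by
  wlog hab : b ≤ a generalizing a b
  · have := this hb ha (le_of_not_ge hab)
    nlinarith [this]
  set s := a ^ (1/2:ℝ) with hs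
  set t := b ^ (1/2:ℝ) with ht
  have hs0 : 0 < s := Real.rpow_pos_of_pos ha _
  have ht0 : 0 < t := Real.rpow_pos_of_pos hb _
  have hsq : s^2 = a := by
    rw [hs, ← Real.rpow_natCast (a ^ (1/2:ℝ)) 2, ← Real.rpow_mul ha.le]; norm_num
  have htq : t^2 = b := by
    rw [ht, ← Real.rpow_natCast (b ^ (1/2:ℝ)) 2, ← Real.rpow_mul hb.le]; norm_num
  have hst : t ≤ s := by
    rw [hs, ht]; exact Real.rpow_le_rpow hb.le hab (by norm_num)
  have key := log_aux ht0 hst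
  have hfac : (Real.log a - Real.log b) * (a - b)
      = 2 * ((Real.log s - Real.log t) * (s + t)) * (s - t) := by
    have hla : Real.log a = 2 * Real.log s := by
      rw [← hsq, Real.log_pow]; norm_num
    have hlb : Real.log b = 2 * Real.log t := by
      rw [← htq, Real.log_pow]; norm_num
    rw [hla, hlb, ← hsq, ← htq]; ring
  rw [hfac]
  have h1 : 0 ≤ s - t := sub_nonneg.mpr hst
  nlinarith [key, h1]

/-! ### A sum identity for symmetric kernels with vanishing row sums -/

lemma sum_identity {n : ℕ} (c : Fin n → Fin n → ℝ) (u v : Fin n → ℝ)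
    (hsym : ∀ k l, c k l = c l k) (hrow : ∀ k, ∑ l, c k l = 0) :
    ∑ k, ∑ l, c k l * (u k * v l)
      = -(1/2) * ∑ k, ∑ l, c k l * ((u k - u l) * (v k - v l)) := by
  have h1 : ∑ k, ∑ l, c k l * (u k * v k) = 0 := by
    have : ∀ k : Fin n, ∑ l, c k l * (u k * v k) = (∑ l, c k l) * (u k * v k) := by
      intro k; rw [Finset.sum_mul]
    simp [this, hrow]
  have h4 : ∑ k, ∑ l, c k l * (u l * v l) = 0 := by
    rw [Finset.sum_comm]
    have : ∀ l : Fin n, ∑ k, c k l * (u l * v l) = (∑ k, c l k) * (u l * v l) := by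
      intro l
      rw [Finset.sum_mul]
      exact Finset.sum_congr rfl fun k _ => by rw [hsym]
    simp [this, hrow]
  have h3 : ∑ k, ∑ l, c k l * (u l * v k) = ∑ k, ∑ l, c k l * (u k * v l) := by
    rw [Finset.sum_comm]
    exact Finset.sum_congr rfl fun k _ => Finset.sum_congr rfl fun l _ => by rw [hsym]
  have expand : ∑ k, ∑ l, c k l * ((u k - u l) * (v k - v l))
      = (∑ k, ∑ l, c k l * (u k * v k)) - (∑ k, ∑ l, c k l * (u k * v l))
        - (∑ k, ∑ l, c k l * (u l * v k)) + (∑ k, ∑ l, c k l * (u l * v l)) := by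
    simp only [← Finset.sum_sub_distrib, ← Finset.sum_add_distrib]
    exact Finset.sum_congr rfl fun k _ => Finset.sum_congr rfl fun l _ => by ring
  rw [expand, h1, h3, h4]
  ring

/-! ### Traces of positive semidefinite matrices -/

lemma psd_entry_nonneg {n : ℕ} {A : Matrix (Fin n) (Fin n) ℂ} (hA : A.PosSemidef)
    (i : Fin n) : 0 ≤ (A i i).re := by
  have h1 := hA.dotProduct_mulVec_nonneg (Pi.single i 1)
  have h2 : star (Pi.single i 1) ⬝ᵥ (A *ᵥ Pi.single i 1) = A i i := by
    simp [dotProduct, Matrix.mulVec, Pi.single_apply, apply_ite,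
      Finset.sum_ite_eq', mul_comm]
  rw [h2] at h1
  exact (Complex.le_def.mp h1).1

lemma psd_trace_re_nonneg {n : ℕ} {A B : Matrix (Fin n) (Fin n) ℂ}
    (hA : A.PosSemidef) (hB : B.PosSemidef) : 0 ≤ ((A * B).trace).re := by
  open scoped MatrixOrder in
  obtain ⟨s, hssa, hsh⟩ : ∃ s : Matrix (Fin n) (Fin n) ℂ, s * s = A ∧ s.IsHermitian :=
    ⟨CFC.sqrt A, CFC.sqrt_mul_sqrt_self A hA.nonneg, (CFC.sqrt_nonneg A).posSemidef.1⟩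
  have hpsd : (s * B * s).PosSemidef := by
    have := hB.mul_mul_conjTranspose_same s
    rwa [hsh.eq] at this
  have htr : (A * B).trace = (s * B * s).trace := by
    rw [← hssa, Matrix.mul_assoc, Matrix.trace_mul_comm, Matrix.mul_assoc]
  rw [htr, Matrix.trace]
  simp only [Matrix.diag]
  rw [Complex.re_sum]
  exact Finset.sum_nonneg fun i _ => psd_entry_nonneg hpsd i

/-! ### Derivative of a nonnegative function vanishing at `0` -/

lemma deriv_nonneg_of_nonneg {g : ℝ → ℝ} {c : ℝ} (hd : HasDerivAt g c 0)
    (h0 : g 0 = 0) (hnn : ∀ t : ℝ, 0 ≤ t → 0 ≤ g t) : 0 ≤ c := by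
  have ht := hasDerivAt_iff_tendsto_slope.mp hd
  have hsub : Set.Ioi (0:ℝ) ⊆ {(0:ℝ)}ᶜ := fun t ht => ne_of_gt ht
  have ht2 : Filter.Tendsto (slope g 0) (nhdsWithin 0 (Set.Ioi 0)) (nhds c) :=
    ht.mono_left (nhdsWithin_mono _ hsub)
  refine ge_of_tendsto ht2 ?_
  filter_upwards [self_mem_nhdsWithin] with t ht'
  have ht0 : 0 < t := ht'
  rw [slope_def_field]
  simp only [h0, sub_zero]
  exact div_nonneg (hnn t ht0.le) ht0.le

/-! ### Spectral projections -/

variable {n : ℕ} {f : Matrix (Fin n) (Fin n) ℂ} (hH : f.IsHermitian)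

/-- The eigenvector unitary as a bare matrix. -/
def Uu : Matrix (Fin n) (Fin n) ℂ :=
  (Matrix.IsHermitian.eigenvectorUnitary hH : Matrix (Fin n) (Fin n) ℂ)

/-- The diagonal matrix units. -/
def Ee (k : Fin n) : Matrix (Fin n) (Fin n) ℂ := Matrix.diagonal (Pi.single k 1)

/-- Spectral projections of `f`. -/
def Pm (k : Fin n) : Matrix (Fin n) (Fin n) ℂ := Uu hH * Ee k * star (Uu hH)

lemma star_mul_self_Uu : star (Uu hH) * Uu hH = 1 :=
  Unitary.star_mul_self_of_mem (SetLike.coe_mem _)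

lemma hdiag (g : ℝ → ℝ) :
    Matrix.diagonal (RCLike.ofReal ∘ g ∘ hH.eigenvalues)
      = ∑ k, ((g (hH.eigenvalues k) : ℝ) : ℂ) • (Ee k : Matrix (Fin n) (Fin n) ℂ) := by
  ext i j
  simp only [Matrix.diagonal_apply, Function.comp_apply, Matrix.sum_apply, Matrix.smul_apply,
    Ee, Pi.single_apply, smul_eq_mul]
  by_cases h : i = j
  · subst h
    simp [Matrix.diagonal_apply, Finset.sum_ite_eq', mul_comm]
  · simp [Matrix.diagonal_apply, h]

lemma hcfc (g : ℝ → ℝ) : cfc g f = ∑ k, ((g (hH.eigenvalues k) : ℝ) : ℂ) • Pm hH k := by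
  rw [hH.cfc_eq, Matrix.IsHermitian.cfc, hdiag hH g, Unitary.conjStarAlgAut_apply]
  rw [Finset.mul_sum, Finset.sum_mul]
  exact Finset.sum_congr rfl fun k _ => by
    simp [Pm, Uu, Matrix.mul_smul, Matrix.smul_mul, Matrix.mul_assoc]

lemma hfeq : f = ∑ k, ((hH.eigenvalues k : ℝ) : ℂ) • Pm hH k := by
  conv_lhs => rw [← cfc_id ℝ f (show IsSelfAdjoint f from hH)]
  exact hcfc hH id

lemma Pm_psd (k : Fin n) : (Pm hH k).PosSemidef := by
  have hE : (Ee k : Matrix (Fin n) (Fin n) ℂ).PosSemidef := by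
    refine Matrix.posSemidef_diagonal_iff.mpr fun i => ?_
    by_cases h : i = k <;> simp [Pi.single_apply, h]
  have := hE.mul_mul_conjTranspose_same (Uu hH)
  rwa [← Matrix.star_eq_conjTranspose] at this

lemma Pm_orth {k l : Fin n} (hkl : k ≠ l) : Pm hH k * Pm hH l = 0 := by
  have hEE : (Ee k : Matrix (Fin n) (Fin n) ℂ) * Ee l = 0 := by
    simp only [Ee, Matrix.diagonal_mul_diagonal]
    have h0 : (fun i => (Pi.single k 1 : Fin n → ℂ) i * (Pi.single l 1 : Fin n → ℂ) i)
        = fun _ => (0:ℂ) := by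
      funext i
      by_cases h : i = k
      · subst h
        simp [Pi.single_apply, Ne.symm hkl]
      · simp [Pi.single_apply, h]
    rw [h0, Matrix.diagonal_zero]
  simp only [Pm]
  calc Uu hH * Ee k * star (Uu hH) * (Uu hH * Ee l * star (Uu hH))
      = Uu hH * Ee k * (star (Uu hH) * Uu hH) * Ee l * star (Uu hH) := by
        simp only [Matrix.mul_assoc]
    _ = 0 := by rw [star_mul_self_Uu hH]; simp [hEE, Matrix.mul_assoc]

lemma Pm_sum : ∑ k, Pm hH k = 1 := by
  have hEsum : ∑ k, (Ee k : Matrix (Fin n) (Fin n) ℂ) = 1 := by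
    ext i j
    simp only [Matrix.sum_apply, Ee, Matrix.diagonal_apply, Pi.single_apply, Matrix.one_apply]
    by_cases h : i = j
    · subst h; simp [Finset.sum_ite_eq']
    · simp [h]
  have h : ∑ k, Pm hH k = Uu hH * (∑ k, Ee k) * star (Uu hH) := by
    rw [Finset.mul_sum, Finset.sum_mul]
    rfl
  rw [h, hEsum, mul_one]
  exact Unitary.mul_star_self_of_mem (SetLike.coe_mem _)

end TraceWRCAux

open TraceWRCAux

/-- Standard weak regularity condition (WRC, `β = 4`) in the trace case:
`−4·tr(f^{1/2} L(f^{1/2})) ≤ −tr((log f)·L f)` for `f > 0`. -/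
theorem trace_WRC (n : ℕ)
    (P : ℝ → (Matrix (Fin n) (Fin n) ℂ →ₗ[ℂ] Matrix (Fin n) (Fin n) ℂ))
    (L : Matrix (Fin n) (Fin n) ℂ →ₗ[ℂ] Matrix (Fin n) (Fin n) ℂ)
    (hP0 : P 0 = LinearMap.id)
    (hPsg : ∀ s t : ℝ, 0 ≤ s → 0 ≤ t → P (s + t) = (P s).comp (P t))
    (hPpos : ∀ t : ℝ, 0 ≤ t → ∀ x : Matrix (Fin n) (Fin n) ℂ,
      x.PosSemidef → (P t x).PosSemidef)
    (hPtr : ∀ t : ℝ, 0 ≤ t → ∀ x : Matrix (Fin n) (Fin n) ℂ, (P t x).trace = x.trace)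
    (hPsym : ∀ t : ℝ, 0 ≤ t → ∀ x y : Matrix (Fin n) (Fin n) ℂ,
      (P t x * y).trace = (x * P t y).trace)
    (hgen : ∀ (x : Matrix (Fin n) (Fin n) ℂ) (t : ℝ) (i j : Fin n),
      HasDerivAt (fun u => P u x i j) ((L (P t x)) i j) t) :
    ∀ f : Matrix (Fin n) (Fin n) ℂ, f.PosDef →
      -(4 : ℝ) * ((rpowM f (1 / 2) * L (rpowM f (1 / 2))).trace).re ≤
        -((logM f * L f).trace).re := by
  intro f hf
  -- entrywise derivative at 0
  have hLP0 : ∀ (x : Matrix (Fin n) (Fin n) ℂ) (i j : Fin n),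
      HasDerivAt (fun u => P u x i j) ((L x) i j) 0 := by
    intro x i j
    have := hgen x 0 i j
    rwa [hP0] at this
  have hu : UniqueDiffWithinAt ℝ (Set.Ici (0:ℝ)) 0 :=
    uniqueDiffOn_Ici 0 0 Set.self_mem_Ici
  -- trace of products derivative
  have mulTraceDeriv : ∀ x y : Matrix (Fin n) (Fin n) ℂ,
      HasDerivAt (fun u => (P u x * y).trace) ((L x * y).trace) 0 := by
    intro x y
    have key : ∀ z : Matrix (Fin n) (Fin n) ℂ,
        (z * y).trace = ∑ i, ∑ j, z i j * y j i := by
      intro z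
      simp [Matrix.trace, Matrix.diag, Matrix.mul_apply]
    simp only [key]
    exact HasDerivAt.fun_sum fun i _ => HasDerivAt.fun_sum fun j _ =>
      (hLP0 x i j).mul_const (y j i)
  have traceMulDeriv : ∀ x y : Matrix (Fin n) (Fin n) ℂ,
      HasDerivAt (fun u => (x * P u y).trace) ((x * L y).trace) 0 := by
    intro x y
    have key : ∀ z : Matrix (Fin n) (Fin n) ℂ,
        (x * z).trace = ∑ i, ∑ j, x i j * z j i := by
      intro z
      simp [Matrix.trace, Matrix.diag, Matrix.mul_apply]
    simp only [key]
    exact HasDerivAt.fun_sum fun i _ => HasDerivAt.fun_sum fun j _ =>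
      (hLP0 y j i).const_mul (x i j)
  -- trace preservation at the generator level
  have hLtr : ∀ x : Matrix (Fin n) (Fin n) ℂ, (L x).trace = 0 := by
    intro x
    have hd : HasDerivAt (fun u => (P u x).trace) ((L x).trace) 0 := by
      simp only [Matrix.trace, Matrix.diag]
      exact HasDerivAt.fun_sum fun i _ => hLP0 x i i
    have h2 : HasDerivWithinAt (fun _ : ℝ => x.trace) ((L x).trace) (Set.Ici 0) 0 :=
      hd.hasDerivWithinAt.congr (fun t ht => (hPtr t ht x).symm) (by simp [hP0])
    have e1 := h2.derivWithin hu
    have e2 := (hasDerivWithinAt_const (0:ℝ) (Set.Ici (0:ℝ)) x.trace).derivWithin hu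
    rw [← e1, e2]
  -- trace symmetry at the generator level
  have hLsym : ∀ x y : Matrix (Fin n) (Fin n) ℂ, (L x * y).trace = (x * L y).trace := by
    intro x y
    have hd : HasDerivAt (fun u => (P u x * y).trace - (x * P u y).trace)
        ((L x * y).trace - (x * L y).trace) 0 :=
      (mulTraceDeriv x y).sub (traceMulDeriv x y)
    have h2 : HasDerivWithinAt (fun _ : ℝ => (0:ℂ))
        ((L x * y).trace - (x * L y).trace) (Set.Ici 0) 0 :=
      hd.hasDerivWithinAt.congr (fun t ht => by rw [hPsym t ht x y, sub_self])
        (by rw [hPsym 0 le_rfl x y, sub_self])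
    have e1 := h2.derivWithin hu
    have e2 := (hasDerivWithinAt_const (0:ℝ) (Set.Ici (0:ℝ)) (0:ℂ)).derivWithin hu
    rw [e2] at e1
    linear_combination -e1
  -- positivity at the generator level, for orthogonal PSD pairs
  have hK : ∀ x y : Matrix (Fin n) (Fin n) ℂ, x.PosSemidef → y.PosSemidef →
      x * y = 0 → 0 ≤ ((x * L y).trace).re := by
    intro x y hx hy hxy
    have hd := traceMulDeriv x y
    have hdre : HasDerivAt (fun u => ((x * P u y).trace).re) (((x * L y).trace).re) 0 :=
      Complex.reCLM.hasFDerivAt.comp_hasDerivAt 0 hd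
    apply deriv_nonneg_of_nonneg hdre
    · simp [hP0, hxy]
    · intro t ht
      exact psd_trace_re_nonneg hx (hPpos t ht y hy)
  -- spectral setup
  have hH : f.IsHermitian := hf.isHermitian
  set lam := hH.eigenvalues with hlam
  have hlampos : ∀ k, 0 < lam k := fun k => hf.eigenvalues_pos k
  set c : Fin n → Fin n → ℝ := fun k l => ((Pm hH k * L (Pm hH l)).trace).re with hc
  have csym : ∀ k l, c k l = c l k := by
    intro k l
    simp only [hc]
    rw [Matrix.trace_mul_comm, ← hLsym (Pm hH l) (Pm hH k)]
  have hrow : ∀ k, ∑ l, c k l = 0 := by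
    intro k
    have h1 : ∑ l, c k l = (((∑ l, Pm hH l) * L (Pm hH k)).trace).re := by
      rw [Finset.sum_mul, Matrix.trace_sum, Complex.re_sum]
      exact Finset.sum_congr rfl fun l _ => by rw [csym k l]
    rw [h1, Pm_sum hH, one_mul, hLtr]
    simp
  have cpos : ∀ k l, k ≠ l → 0 ≤ c k l := by
    intro k l hkl
    exact hK (Pm hH k) (Pm hH l) (Pm_psd hH k) (Pm_psd hH l) (Pm_orth hH hkl)
  -- expansion of traces
  have hexp : ∀ a b : Fin n → ℝ,
      (((∑ k, ((a k : ℝ) : ℂ) • Pm hH k) * L (∑ l, ((b l : ℝ) : ℂ) • Pm hH l)).trace).re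
        = ∑ k, ∑ l, c k l * (a k * b l) := by
    intro a b
    rw [map_sum]
    simp only [_root_.map_smul]
    rw [Finset.sum_mul_sum]
    simp only [smul_mul_assoc, mul_smul_comm, smul_smul, Matrix.trace_sum, Matrix.trace_smul,
      smul_eq_mul]
    rw [Complex.re_sum]
    refine Finset.sum_congr rfl fun k _ => ?_
    rw [Complex.re_sum]
    refine Finset.sum_congr rfl fun l _ => ?_
    rw [← Complex.ofReal_mul, Complex.re_ofReal_mul]
    simp only [hc]
    ring
  -- the three coefficient functions
  set w : Fin n → ℝ := fun k => lam k ^ (1/2:ℝ) with hw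
  set uu : Fin n → ℝ := fun k => Real.log (lam k) with huu
  set vv : Fin n → ℝ := fun k => lam k with hvv
  have T1 : ((rpowM f (1/2) * L (rpowM f (1/2))).trace).re = ∑ k, ∑ l, c k l * (w k * w l) := by
    have e1 : rpowM f (1/2) = ∑ k, ((w k : ℝ) : ℂ) • Pm hH k := hcfc hH _
    rw [e1]
    exact hexp w w
  have T2 : ((logM f * L f).trace).re = ∑ k, ∑ l, c k l * (uu k * vv l) := by
    have e2 : logM f = ∑ k, ((uu k : ℝ) : ℂ) • Pm hH k := hcfc hH _
    have e3 : L f = L (∑ l, ((vv l : ℝ) : ℂ) • Pm hH l) := by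
      rw [← hfeq hH]
    rw [e2, e3]
    exact hexp uu vv
  -- combine
  have S1 := sum_identity c w w csym hrow
  have S2 := sum_identity c uu vv csym hrow
  have hterm : ∀ k l, 0 ≤ c k l *
      ((uu k - uu l) * (vv k - vv l) - 4 * ((w k - w l) * (w k - w l))) := by
    intro k l
    by_cases hkl : k = l
    · subst hkl; simp
    · apply mul_nonneg (cpos k l hkl)
      have := key_scalar (hlampos k) (hlampos l)
      simp only [huu, hvv, hw]
      nlinarith [this]
  have hbig : 0 ≤ ∑ k, ∑ l, c k l *
      ((uu k - uu l) * (vv k - vv l) - 4 * ((w k - w l) * (w k - w l))) :=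
    Finset.sum_nonneg fun k _ => Finset.sum_nonneg fun l _ => hterm k l
  have hsplit : ∑ k, ∑ l, c k l *
        ((uu k - uu l) * (vv k - vv l) - 4 * ((w k - w l) * (w k - w l)))
      = (∑ k, ∑ l, c k l * ((uu k - uu l) * (vv k - vv l)))
        - 4 * ∑ k, ∑ l, c k l * ((w k - w l) * (w k - w l)) := by
    rw [Finset.mul_sum, ← Finset.sum_sub_distrib]
    refine Finset.sum_congr rfl fun k _ => ?_
    rw [Finset.mul_sum, ← Finset.sum_sub_distrib]
    exact Finset.sum_congr rfl fun l _ => by ring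
  rw [T1, T2]
  rw [hsplit] at hbig
  linarith [S1, S2, hbig]

end
end
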